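/- arXiv:1107.4427 — 8 statements merged into one kernel-verified Lean document; each statement's English description precedes it below -/
import Mathlib

section
/- Let A be the (n+1)-dimensional n-ary algebra of type (B_1) over a field F (only nonzero basic product [e_2,...,e_{n+1}] = e_1). Then any linear map φ defined by φ(e_1) = δ·(Σ_{k=2}^{n+1} β_{kk})·e_1 and φ(e_i) = Σ_{j=1}^{n+1} β_{ij} e_j for 2 ≤ i ≤ n+1 (for arbitrary scalars β_{ij}) is a δ-derivation of A. -/
section Aux

variable {F A : Type*} [Field F] [AddCommGroup A] [Module F A] {n : ℕ}
variable (b : Module.Basis (Fin (n + 1)) F A) (br : AlternatingMap F A A (Fin n))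

/-- An injective map `Fin n → Fin (n+1)` avoiding `i0` factors through `succAbove i0`
by a permutation. -/
lemma aux_factor (u : Fin n → Fin (n + 1)) (hu : Function.Injective u)
    (i0 : Fin (n + 1)) (hi0 : ∀ k, u k ≠ i0) :
    ∃ σ : Equiv.Perm (Fin n), u = i0.succAbove ∘ σ := by
  classical
  have hex : ∀ k, ∃ j, i0.succAbove j = u k := fun k => Fin.exists_succAbove_eq (hi0 k)
  choose f hf using hex
  have hfinj : Function.Injective f := by
    intro a c h
    apply hu
    rw [← hf a, ← hf c, h]
  have hfbij : Function.Bijective f := Finite.injective_iff_bijective.1 hfinj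
  refine ⟨Equiv.ofBijective f hfbij, ?_⟩
  funext k
  simp [Equiv.ofBijective, hf k]

lemma aux_missing (u : Fin n → Fin (n + 1)) (hu : Function.Injective u) :
    ∃ i0 : Fin (n + 1), ∀ k, u k ≠ i0 := by
  by_contra h
  push_neg at h
  have hs : Function.Surjective u := by
    intro i0
    obtain ⟨k, hk⟩ := h i0
    exact ⟨k, hk⟩
  have := Fintype.card_le_of_surjective u hs
  simp at this

lemma aux_eval_notinj (u : Fin n → Fin (n + 1)) (hu : ¬ Function.Injective u) :
    br (fun k => b (u k)) = 0 := by
  refine br.map_eq_zero_of_not_injective _ ?_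
  intro h
  exact hu (fun a c hac => h (by simp [hac]))

variable (hbr : ∀ i : Fin (n + 1), br (b ∘ i.succAbove) = if i = 0 then b 0 else 0)

include hbr in
/-- Evaluation of `br` on basis tuples: injective case. -/
lemma aux_eval_inj (u : Fin n → Fin (n + 1)) (i0 : Fin (n + 1))
    (σ : Equiv.Perm (Fin n)) (husig : u = i0.succAbove ∘ σ) :
    br (fun k => b (u k)) = (Equiv.Perm.sign σ : ℤ) • (if i0 = 0 then b 0 else 0) := by
  have h1 : (fun k => b (u k)) = (b ∘ i0.succAbove) ∘ σ := by
    funext k; simp [husig]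
  rw [h1, br.map_perm (b ∘ i0.succAbove) σ, hbr i0, Units.smul_def]

include hbr in
/-- Evaluation of `br` on basis tuples: if `0` is in the range, the value is `0`. -/
lemma aux_eval_zero_mem (u : Fin n → Fin (n + 1)) (k0 : Fin n) (hk0 : u k0 = 0) :
    br (fun k => b (u k)) = 0 := by
  classical
  by_cases hu : Function.Injective u
  · obtain ⟨i0, hi0⟩ := aux_missing u hu
    obtain ⟨σ, hσ⟩ := aux_factor u hu i0 hi0
    rw [aux_eval_inj b br hbr u i0 σ hσ]
    have : i0 ≠ 0 := fun h => hi0 k0 (by rw [hk0, h])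
    simp [this]
  · exact aux_eval_notinj b br u hu

end Aux

/-- Type `(B_1)`: any linear map given by
`φ(e_1) = δ·(Σ_{k=2}^{n+1} β_{kk})·e_1`, `φ(e_i) = Σ_j β_{ij} e_j` (`i ≥ 2`)
is a `δ`-derivation. -/
theorem B1_map_is_delta_derivation
    {F A : Type*} [Field F] [AddCommGroup A] [Module F A] {n : ℕ} (hn : 2 ≤ n)
    (b : Module.Basis (Fin (n + 1)) F A)
    (br : AlternatingMap F A A (Fin n))
    (hbr : ∀ i : Fin (n + 1),
      br (b ∘ i.succAbove) = if i = 0 then b 0 else 0)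
    (δ : F) (β : Fin (n + 1) → Fin (n + 1) → F)
    (φ : A →ₗ[F] A)
    (hφ : φ = b.constr F (fun i : Fin (n + 1) =>
      if i = 0 then
        (δ * ∑ k ∈ Finset.univ.erase (0 : Fin (n + 1)), β k k) • b 0
      else ∑ j, β i j • b j)) :
    ∀ x : Fin n → A,
      φ (br x) = δ • ∑ i, br (Function.update x i (φ (x i))) := by
  classical
  set S : F := ∑ k ∈ Finset.univ.erase (0 : Fin (n + 1)), β k k with hS
  have hφ0 : φ (b 0) = (δ * S) • b 0 := by
    rw [hφ, Module.Basis.constr_basis]; simp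
  have hφi : ∀ i : Fin (n + 1), i ≠ 0 → φ (b i) = ∑ j, β i j • b j := by
    intro i hi; rw [hφ, Module.Basis.constr_basis]; simp [hi]
  -- the right-hand side as a multilinear map
  set Rm : MultilinearMap F (fun _ : Fin n => A) A :=
    ∑ i : Fin n, br.toMultilinearMap.compLinearMap
      (fun j => if j = i then φ else LinearMap.id) with hRmdef
  have hRm : ∀ x : Fin n → A, Rm x = ∑ i, br (Function.update x i (φ (x i))) := by
    intro x
    simp only [hRmdef, MultilinearMap.sum_apply, MultilinearMap.compLinearMap_apply]
    refine Finset.sum_congr rfl fun i _ => congrArg _ ?_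
    funext j
    by_cases h : j = i
    · subst h; simp
    · simp [h, Function.update_of_ne h]
  -- it is alternating
  have hRalt : ∀ (x : Fin n → A) (i j : Fin n), x i = x j → i ≠ j → Rm x = 0 := by
    intro x i j hx hij
    rw [hRm]
    have key : ∀ k, k ≠ i → k ≠ j → br (Function.update x k (φ (x k))) = 0 := by
      intro k hki hkj
      refine br.map_eq_zero_of_eq _ (i := i) (j := j) ?_ hij
      rw [Function.update_of_ne (fun h => hki h.symm), Function.update_of_ne (fun h => hkj h.symm), hx]
    have hpair : br (Function.update x i (φ (x i))) = - br (Function.update x j (φ (x j))) := by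
      have heq : Function.update x i (φ (x i)) = (Function.update x j (φ (x j))) ∘ Equiv.swap i j := by
        funext k
        rcases eq_or_ne k i with rfl | hki
        · rw [Function.comp_apply, Equiv.swap_apply_left, Function.update_self,
            Function.update_self, hx]
        rcases eq_or_ne k j with rfl | hkj
        · rw [Function.comp_apply, Equiv.swap_apply_right,
            Function.update_of_ne hij.symm, Function.update_of_ne hij]
          exact hx.symm
        · rw [Function.comp_apply, Equiv.swap_apply_of_ne_of_ne hki hkj,
            Function.update_of_ne hki, Function.update_of_ne hkj]
      rw [heq, br.map_swap _ hij]
    rw [← Finset.add_sum_erase _ _ (Finset.mem_univ i),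
      ← Finset.add_sum_erase _ _ (Finset.mem_erase.2 ⟨hij.symm, Finset.mem_univ j⟩),
      Finset.sum_eq_zero (fun k hk => key k (Finset.mem_erase.1 (Finset.mem_erase.1 hk).2).1
        (Finset.mem_erase.1 hk).1), hpair]
    abel
  set R : AlternatingMap F A A (Fin n) := { Rm with map_eq_zero_of_eq' := hRalt } with hRdef
  have hRapp : ∀ x, R x = Rm x := fun _ => rfl
  -- main equality as alternating maps
  have main : φ.compAlternatingMap br = δ • R := by
    refine Module.Basis.ext_alternating b ?_
    intro v hv
    obtain ⟨i0, hi0⟩ := aux_missing v hv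
    obtain ⟨σ, hσ⟩ := aux_factor v hv i0 hi0
    have heval := aux_eval_inj b br hbr v i0 σ hσ
    set ε : F := ((Equiv.Perm.sign σ : ℤ) : F) with hε
    have hmem : ∀ j : Fin (n + 1), j ≠ i0 → ∃ i', v i' = j := by
      intro j hj
      obtain ⟨z, hz⟩ := Fin.exists_succAbove_eq hj
      exact ⟨σ.symm z, by simp [hσ, hz]⟩
    have hupd : ∀ (i : Fin n) (j : Fin (n + 1)),
        Function.update (fun k => b (v k)) i (b j) = fun k => b (Function.update v i j k) := by
      intro i j
      funext k
      by_cases hk : k = i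
      · subst hk; simp
      · rw [Function.update_of_ne hk, Function.update_of_ne hk]
    have hRterm : ∀ i : Fin n,
        br (Function.update (fun k => b (v k)) i (φ (b (v i))))
          = (if i0 = 0 then (β (v i) (v i) * ε) • b 0 else 0) := by
      intro i
      by_cases hvi : v i = 0
      · have hi0ne : i0 ≠ 0 := fun h => hi0 i (hvi.trans h.symm)
        rw [if_neg hi0ne]
        have h1 : φ (b (v i)) = (δ * S) • b (v i) := by rw [hvi, hφ0]
        have h2 : Function.update (fun k => b (v k)) i (b (v i)) = fun k => b (v k) :=
          Function.update_eq_self i _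
        rw [h1, AlternatingMap.map_update_smul, h2,
          aux_eval_zero_mem b br hbr v i hvi, smul_zero]
      · rw [hφi (v i) hvi, AlternatingMap.map_update_sum]
        simp only [AlternatingMap.map_update_smul, hupd]
        by_cases h0 : i0 = 0
        · rw [if_pos h0]
          rw [Finset.sum_eq_single (v i)]
          · rw [Function.update_eq_self, heval, if_pos h0, ← Int.cast_smul_eq_zsmul F,
              ← hε, smul_smul]
          · intro j _ hj
            by_cases hj0 : j = 0
            · subst hj0
              rw [aux_eval_zero_mem b br hbr _ i (by simp), smul_zero]
            · obtain ⟨i', hi'⟩ := hmem j (by rw [h0]; exact hj0)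
              have hii' : i' ≠ i := fun h => hj (by rw [← hi', h])
              have : ¬ Function.Injective (Function.update v i j) := by
                intro hinj
                exact hii' (hinj (show Function.update v i j i' = Function.update v i j i by
                  rw [Function.update_of_ne hii', Function.update_self, hi']))
              rw [aux_eval_notinj b br _ this, smul_zero]
          · simp
        · rw [if_neg h0]
          refine Finset.sum_eq_zero fun j _ => ?_
          by_cases hj0 : j = 0
          · subst hj0
            rw [aux_eval_zero_mem b br hbr _ i (by simp), smul_zero]
          · obtain ⟨i', hi'⟩ := hmem 0 (fun h => h0 h.symm)
            have hii' : i' ≠ i := fun h => hvi (by rw [← h, hi'])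
            rw [aux_eval_zero_mem b br hbr _ i' (by rw [Function.update_of_ne hii', hi']),
              smul_zero]
    have hL : (φ.compAlternatingMap br) (fun k => b (v k))
        = δ • R (fun k => b (v k)) := by
      rw [LinearMap.compAlternatingMap_apply, heval]
      have hR : R (fun k => b (v k))
          = ∑ i, br (Function.update (fun k => b (v k)) i (φ (b (v i)))) := by
        rw [hRapp, hRm]
      rw [hR]
      simp only [hRterm]
      by_cases h0 : i0 = 0
      · simp only [h0, eq_self_iff_true, ite_true]
        have hsum : ∑ i : Fin n, β (v i) (v i) = S := by
          have h1 : ∑ i : Fin n, β (v i) (v i)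
              = ∑ i : Fin n, β ((0 : Fin (n+1)).succAbove i) ((0 : Fin (n+1)).succAbove i) := by
            rw [hσ, h0]
            exact Equiv.sum_comp σ (fun i => β ((0 : Fin (n+1)).succAbove i)
              ((0 : Fin (n+1)).succAbove i))
          rw [h1, hS, Finset.sum_erase_eq_sub (Finset.mem_univ (0 : Fin (n+1))),
            Fin.sum_univ_succAbove (fun k => β k k) 0]
          abel
        rw [map_zsmul, hφ0, ← Int.cast_smul_eq_zsmul F, ← hε,
          ← Finset.sum_smul, ← Finset.sum_mul, hsum, smul_smul, smul_smul]
        congr 1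
        ring
      · simp only [h0, if_neg h0, if_false, smul_zero, Finset.sum_const_zero, map_zero]
    exact hL
  intro x
  have := congrArg (fun f => f x) main
  simpa [hRapp, hRm] using this
end

section
/- Let A be the (n+1)-dimensional n-ary algebra of type (B_2) over a field F with δ ∈ F, δ ≠ 1. Then the linear map φ defined by φ(e_1) = (δ/(1-δ))·(Σ_{k=2}^n β_{kk})·e_1, φ(e_{n+1}) = β_{n+1,n+1}·e_{n+1}, and φ(e_i) = Σ_{j=1}^{n+1} β_{ij} e_j for 2 ≤ i ≤ n (arbitrary scalars β_{ij}) is a δ-derivation of A. -/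
/-- Type `(B_2)`: the linear map with
`φ(e_1) = (δ/(1-δ))·(Σ_{k=2}^{n} β_{kk})·e_1`, `φ(e_{n+1}) = β_{n+1,n+1} e_{n+1}`,
`φ(e_i) = Σ_j β_{ij} e_j` for `2 ≤ i ≤ n`, is a `δ`-derivation. -/
theorem B2_map_is_delta_derivation
    {F A : Type*} [Field F] [AddCommGroup A] [Module F A] {n : ℕ} (hn : 2 ≤ n)
    (b : Module.Basis (Fin (n + 1)) F A)
    (br : AlternatingMap F A A (Fin n))
    (hbr : ∀ i : Fin (n + 1),
      br (b ∘ i.succAbove) = if i = Fin.last n then b 0 else 0)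
    (δ : F) (hδ : δ ≠ 1) (β : Fin (n + 1) → Fin (n + 1) → F)
    (φ : A →ₗ[F] A)
    (hφ : φ = b.constr F (fun i : Fin (n + 1) =>
      if i = 0 then
        (δ / (1 - δ) *
          ∑ k ∈ (Finset.univ.erase (0 : Fin (n + 1))).erase (Fin.last n),
            β k k) • b 0
      else if i = Fin.last n then β (Fin.last n) (Fin.last n) • b (Fin.last n)
      else ∑ j, β i j • b j)) :
    ∀ x : Fin n → A,
      φ (br x) = δ • ∑ i, br (Function.update x i (φ (x i))) := by
  classical
  set S : F := ∑ k ∈ (Finset.univ.erase (0 : Fin (n + 1))).erase (Fin.last n), β k k with hS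
  set c : F := δ / (1 - δ) * S with hc
  have h1δ : (1 : F) - δ ≠ 0 := sub_ne_zero.mpr (Ne.symm hδ)
  have h0last : (0 : Fin (n + 1)) ≠ Fin.last n := by
    simp only [ne_eq, Fin.ext_iff, Fin.val_zero, Fin.val_last]
    omega
  have hφb : ∀ j : Fin (n + 1), φ (b j) =
      if j = 0 then c • b 0
      else if j = Fin.last n then β (Fin.last n) (Fin.last n) • b (Fin.last n)
      else ∑ j', β j j' • b j' := by
    intro j; rw [hφ, Module.Basis.constr_basis]
  -- rewriting updates of basis tuples
  have hupd : ∀ (w : Fin n → Fin (n + 1)) (i : Fin n) (j : Fin (n + 1)),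
      Function.update (b ∘ w) i (b j) = b ∘ Function.update w i j := by
    intro w i j; funext k
    rcases eq_or_ne k i with rfl | hk
    · simp
    · simp [Function.update_of_ne hk]
  -- duplicates give zero
  have hdup : ∀ (v : Fin n → Fin (n + 1)) (i j : Fin n), i ≠ j → v i = v j →
      br (b ∘ v) = 0 := by
    intro v i j hij hv
    exact br.map_eq_zero_of_eq _ (by simp [Function.comp, hv]) hij
  -- factor an injective map through succAbove
  have hfact : ∀ (v : Fin n → Fin (n + 1)), Function.Injective v →
      ∀ m : Fin (n + 1), (∀ k, v k ≠ m) →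
      ∃ e : Equiv.Perm (Fin n), v = m.succAbove ∘ e := by
    intro v hv m hm
    have hg : ∀ k, ∃ z, m.succAbove z = v k := fun k => Fin.exists_succAbove_eq (hm k)
    choose g hg using hg
    have hginj : Function.Injective g := by
      intro a a' ha
      apply hv
      rw [← hg a, ← hg a', ha]
    refine ⟨Equiv.ofBijective g (Finite.injective_iff_bijective.mp hginj), ?_⟩
    funext k
    simp only [Function.comp_apply, Equiv.ofBijective_apply]
    exact (hg k).symm
  -- vanishing lemma
  have hZ : ∀ (v : Fin n → Fin (n + 1)) (m : Fin (n + 1)), (∀ k, v k ≠ m) →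
      m ≠ Fin.last n → br (b ∘ v) = 0 := by
    intro v m hm hmlast
    by_cases hv : Function.Injective v
    · obtain ⟨e, rfl⟩ := hfact v hv m hm
      have hcomp : b ∘ (m.succAbove ∘ e) = (b ∘ m.succAbove) ∘ e := rfl
      rw [hcomp, br.map_perm, hbr m, if_neg hmlast, smul_zero]
    · rw [Function.not_injective_iff] at hv
      obtain ⟨i, j, hvij, hij⟩ := hv
      exact hdup v i j hij hvij
  -- the key computation on succAbove tuples
  have hkey : ∀ m : Fin (n + 1),
      φ (br (b ∘ m.succAbove)) =
        δ • ∑ i, br (Function.update (b ∘ m.succAbove) i (φ ((b ∘ m.succAbove) i))) := by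
    intro m
    by_cases hm : m = Fin.last n
    · subst hm
      simp only [Fin.succAbove_last, Function.comp_apply]
      have hx : br (b ∘ Fin.castSucc) = b 0 := by
        rw [← Fin.succAbove_last, hbr, if_pos rfl]
      have hn0 : 0 < n := by omega
      set i₀ : Fin n := ⟨0, hn0⟩ with hi₀def
      have hi₀ : Fin.castSucc i₀ = (0 : Fin (n + 1)) := by
        apply Fin.ext
        simp [hi₀def]
      have hterm : ∀ i : Fin n,
          br (Function.update (b ∘ Fin.castSucc) i (φ (b i.castSucc))) =
            (if Fin.castSucc i = 0 then c else β i.castSucc i.castSucc) • b 0 := by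
        intro i
        rcases eq_or_ne (Fin.castSucc i) 0 with hcs0 | hcs0
        · rw [if_pos hcs0, hφb, if_pos hcs0, br.map_update_smul]
          have hb0 : (b 0 : A) = (b ∘ Fin.castSucc) i := by
            simp [Function.comp_apply, hcs0]
          rw [hb0, Function.update_eq_self, hx, ← hb0]
        · have hcsl : Fin.castSucc i ≠ Fin.last n := (Fin.castSucc_lt_last i).ne
          rw [if_neg hcs0, hφb, if_neg hcs0, if_neg hcsl]
          rw [br.map_update_sum]
          have hone : ∀ j : Fin (n + 1),
              br (Function.update (b ∘ Fin.castSucc) i (β i.castSucc j • b j)) =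
                β i.castSucc j • br (b ∘ Function.update Fin.castSucc i j) := by
            intro j
            rw [br.map_update_smul, hupd]
          rw [Finset.sum_congr rfl fun j _ => hone j]
          rw [Finset.sum_eq_single i.castSucc]
          · rw [Function.update_eq_self, hx]
          · intro j _ hj
            rcases eq_or_ne j (Fin.last n) with rfl | hjl
            · rw [hZ (Function.update Fin.castSucc i (Fin.last n)) i.castSucc ?_ hcsl,
                smul_zero]
              intro k
              rcases eq_or_ne k i with rfl | hk
              · rw [Function.update_self]
                exact fun h => hcsl h.symm
              · rw [Function.update_of_ne hk]
                exact fun h => hk (Fin.castSucc_injective n h)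
            · obtain ⟨k, hk⟩ := Fin.exists_succAbove_eq hjl
              rw [Fin.succAbove_last] at hk
              have hki : k ≠ i := fun h => hj (by rw [← hk, h])
              rw [hdup _ i k (fun h => hki h.symm) ?_, smul_zero]
              rw [Function.update_self, Function.update_of_ne hki, hk]
          · simp
      rw [Finset.sum_congr rfl fun i _ => hterm i]
      rw [← Finset.sum_smul]
      rw [← Finset.add_sum_erase _ _ (Finset.mem_univ i₀), if_pos hi₀]
      have hre : ∑ i ∈ Finset.univ.erase i₀,
          (if Fin.castSucc i = 0 then c else β i.castSucc i.castSucc) = S := by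
        rw [Finset.sum_congr rfl (fun i hi => if_neg (fun h => by
          have : i = i₀ := Fin.castSucc_injective n (by rw [h, hi₀])
          exact (Finset.ne_of_mem_erase hi) this))]
        rw [hS]
        have himg : (Finset.univ.erase (0 : Fin (n + 1))).erase (Fin.last n) =
            (Finset.univ.erase i₀).image Fin.castSucc := by
          ext k
          simp only [Finset.mem_erase, Finset.mem_image, Finset.mem_univ, and_true]
          constructor
          · rintro ⟨hkl, hk0⟩
            obtain ⟨k', hk'⟩ := Fin.exists_succAbove_eq hkl
            rw [Fin.succAbove_last] at hk'
            refine ⟨k', fun h => hk0 ?_, hk'⟩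
            rw [← hk', h, hi₀]
          · rintro ⟨k', hk'0, rfl⟩
            refine ⟨(Fin.castSucc_lt_last k').ne, fun h => hk'0 ?_⟩
            exact Fin.castSucc_injective n (by rw [h, hi₀])
        rw [himg, Finset.sum_image (fun a _ a' _ h => Fin.castSucc_injective n h)]
      rw [hre]
      rw [hx, hφb, if_pos rfl, smul_smul]
      congr 1
      rw [hc]
      have hcval : δ / (1 - δ) * S * (1 - δ) = δ * S := by
        rw [mul_right_comm, div_mul_cancel₀ _ h1δ]
      linear_combination hcval
    · -- m ≠ last : both sides vanish
      have hx : br (b ∘ m.succAbove) = 0 := by rw [hbr, if_neg hm]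
      rw [hx, map_zero]
      rw [Finset.sum_eq_zero, smul_zero]
      intro i _
      simp only [Function.comp_apply]
      have hself : Function.update (b ∘ m.succAbove) i (b (m.succAbove i))
          = b ∘ m.succAbove := by
        have hb : (b (m.succAbove i) : A) = (b ∘ m.succAbove) i := rfl
        rw [hb, Function.update_eq_self]
      rcases eq_or_ne (m.succAbove i) 0 with he0 | he0
      · rw [hφb, if_pos he0, br.map_update_smul,
          show (0 : Fin (n + 1)) = m.succAbove i from he0.symm, hself, hx, smul_zero]
      · rcases eq_or_ne (m.succAbove i) (Fin.last n) with hel | hel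
        · rw [hφb, if_neg he0, if_pos hel, br.map_update_smul, ← hel, hself, hx, smul_zero]
        · rw [hφb, if_neg he0, if_neg hel, br.map_update_sum]
          refine Finset.sum_eq_zero fun j _ => ?_
          rw [br.map_update_smul, hupd]
          rcases eq_or_ne j (m.succAbove i) with rfl | hje
          · rw [Function.update_eq_self, hx, smul_zero]
          · rcases eq_or_ne j m with hjme | hjm
            · rw [hjme, hZ _ (m.succAbove i) ?_ hel, smul_zero]
              intro k
              rcases eq_or_ne k i with rfl | hk
              · rw [Function.update_self]
                exact (Fin.succAbove_ne m k).symm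
              · rw [Function.update_of_ne hk]
                exact fun h => hk (Fin.succAbove_right_injective h)
            · obtain ⟨k, hk⟩ := Fin.exists_succAbove_eq hjm
              have hki : k ≠ i := fun h => hje (by rw [← hk, h])
              rw [hdup _ i k (fun h => hki h.symm) ?_, smul_zero]
              rw [Function.update_self, Function.update_of_ne hki, hk]
  -- assemble both sides as alternating maps
  let D : MultilinearMap F (fun _ : Fin n => A) A :=
    ∑ i : Fin n, br.toMultilinearMap.compLinearMap
      (fun j => if j = i then φ else LinearMap.id)
  have hD : ∀ x : Fin n → A, D x = ∑ i, br (Function.update x i (φ (x i))) := by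
    intro x
    simp only [D, MultilinearMap.sum_apply, MultilinearMap.compLinearMap_apply,
      AlternatingMap.coe_multilinearMap]
    refine Finset.sum_congr rfl fun i _ => ?_
    congr 1
    funext k
    rcases eq_or_ne k i with rfl | hk
    · simp
    · simp [hk, Function.update_of_ne hk]
  have hDalt : ∀ (x : Fin n → A) (i j : Fin n), x i = x j → i ≠ j → D x = 0 := by
    intro x i j hx hij
    rw [hD]
    have hswap : Function.update x j (φ (x j)) =
        (Function.update x i (φ (x i))) ∘ Equiv.swap i j := by
      funext k
      simp only [Function.comp_apply]
      rw [Function.update_apply, Function.update_apply]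
      rcases eq_or_ne k i with rfl | hki
      · simp [Equiv.swap_apply_left, hij, hij.symm, hx]
      · rcases eq_or_ne k j with rfl | hkj
        · simp [Equiv.swap_apply_right, hx]
        · simp [Equiv.swap_apply_of_ne_of_ne hki hkj, hki, hkj]
    have hjmem : j ∈ Finset.univ.erase i := Finset.mem_erase.mpr ⟨hij.symm, Finset.mem_univ j⟩
    rw [← Finset.add_sum_erase _ _ (Finset.mem_univ i), ← Finset.add_sum_erase _ _ hjmem]
    rw [hswap, br.map_swap _ hij]
    rw [Finset.sum_eq_zero]
    · abel
    · intro k hk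
      have hki : k ≠ i := (Finset.mem_erase.mp (Finset.mem_of_mem_erase hk)).1
      have hkj : k ≠ j := (Finset.mem_erase.mp hk).1
      refine br.map_eq_zero_of_eq _ (i := i) (j := j) ?_ hij
      rw [Function.update_of_ne hki.symm, Function.update_of_ne hkj.symm]
      exact hx
  let G : AlternatingMap F A A (Fin n) :=
    { toMultilinearMap := D
      map_eq_zero_of_eq' := fun v i j h hij => hDalt v i j h hij }
  have hG : ∀ x : Fin n → A, G x = ∑ i, br (Function.update x i (φ (x i))) := hD
  let L : AlternatingMap F A A (Fin n) := φ.compAlternatingMap br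
  have hLsub : ∀ m : Fin (n + 1), L (b ∘ m.succAbove) = (δ • G) (b ∘ m.succAbove) := by
    intro m
    show φ (br (b ∘ m.succAbove)) = (δ • G) (b ∘ m.succAbove)
    rw [AlternatingMap.smul_apply, hG]
    exact hkey m
  have hLG : L = δ • G := by
    refine Module.Basis.ext_alternating b fun v hv => ?_
    have hm : ∃ m : Fin (n + 1), ∀ k, v k ≠ m := by
      have hns : ¬ Function.Surjective v := by
        intro h
        have := Fintype.card_le_of_surjective v h
        simp only [Fintype.card_fin] at this
        omega
      rw [Function.Surjective] at hns
      push_neg at hns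
      exact hns
    obtain ⟨m, hm⟩ := hm
    obtain ⟨e, rfl⟩ := hfact v hv m hm
    show L ((b ∘ m.succAbove) ∘ e) = (δ • G) ((b ∘ m.succAbove) ∘ e)
    rw [L.map_perm, (δ • G).map_perm, hLsub]
  intro x
  have hx := DFunLike.congr_fun hLG x
  rw [AlternatingMap.smul_apply, hG] at hx
  exact hx
end

section
/- Let A be the (n+1)-dimensional n-ary algebra of type (C_1) over a field F, with [e_1,...,e_{n-1},e_{n+1}] = e_n, [e_1,...,e_n] = α·e_{n+1} (α ≠ 0), other basic products zero. Let φ be a δ-derivation with δ ≠ 1 and δ ≠ -1, with matrix entries β_{ij}. Then β_{n,n+1} = 0. -/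
/-- If `g : Fin n → Fin (n+1)` is injective and misses `m`, then `br (b ∘ g)`
vanishes whenever `br (b ∘ m.succAbove)` does. -/
lemma br_comp_eq_zero_aux {F A : Type*} [Field F] [AddCommGroup A] [Module F A] {n : ℕ}
    (b : Module.Basis (Fin (n + 1)) F A)
    (br : AlternatingMap F A A (Fin n))
    (g : Fin n → Fin (n + 1)) (hg : Function.Injective g)
    (m : Fin (n + 1)) (hm : ∀ p, g p ≠ m)
    (hz : br (b ∘ m.succAbove) = 0) :
    br (b ∘ g) = 0 := by
  choose τ hτ using fun p => Fin.exists_succAbove_eq (hm p)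
  have hτinj : Function.Injective τ := by
    intro p q hpq
    apply hg
    rw [← hτ p, ← hτ q, hpq]
  have hτbij : Function.Bijective τ := Finite.injective_iff_bijective.mp hτinj
  let σ : Equiv.Perm (Fin n) := Equiv.ofBijective τ hτbij
  have hcomp : b ∘ g = (b ∘ m.succAbove) ∘ σ := by
    funext p
    simp only [Function.comp_apply, σ, Equiv.ofBijective_apply, hτ p]
  rw [hcomp, br.map_perm, hz, smul_zero]

/-- Type `(C_1)`: for a `δ`-derivation `φ` with `δ ≠ 1, -1`, the matrix
entry `β_{n,n+1}` vanishes. -/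
theorem delta_derivation_C1_offdiag_zero
    {F A : Type*} [Field F] [AddCommGroup A] [Module F A] {n : ℕ} (hn : 2 ≤ n)
    (b : Module.Basis (Fin (n + 1)) F A)
    (α : F) (hα : α ≠ 0)
    (br : AlternatingMap F A A (Fin n))
    (hbr : ∀ i : Fin (n + 1),
      br (b ∘ i.succAbove) =
        if (i : ℕ) = n - 1 then b i
        else if (i : ℕ) = n then α • b i
        else 0)
    (δ : F) (hδ1 : δ ≠ 1) (hδ2 : δ ≠ -1) (φ : A →ₗ[F] A)
    (hφ : ∀ x : Fin n → A,
      φ (br x) = δ • ∑ i, br (Function.update x i (φ (x i)))) :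
    b.repr (φ (b ⟨n - 1, by omega⟩)) (Fin.last n) = 0 := by
  set i1 : Fin (n + 1) := ⟨n - 1, by omega⟩ with hi1
  set jl : Fin n := ⟨n - 1, by omega⟩ with hjl
  set lastI : Fin (n + 1) := Fin.last n with hlastI
  have hi1last : i1 ≠ lastI := by
    simp only [Fin.ne_iff_vne, hi1, hlastI, Fin.last]
    omega
  -- basic succAbove facts
  have hsa1 : i1.succAbove jl = lastI := by
    rw [Fin.succAbove_of_le_castSucc]
    · ext; simp [hjl, hlastI]; omega
    · rw [Fin.le_def]; simp [hjl, hi1]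
  have hsa1' : ∀ p : Fin n, p ≠ jl → i1.succAbove p = p.castSucc := by
    intro p hp
    rw [Fin.succAbove_of_castSucc_lt]
    rw [Fin.lt_def]
    simp only [Fin.coe_castSucc, hi1]
    have := p.isLt
    have : (p : ℕ) ≠ n - 1 := fun h => hp (by ext; simp [hjl, h])
    omega
  have hsalast : ∀ p : Fin n, lastI.succAbove p = p.castSucc := by
    intro p; rw [hlastI, Fin.succAbove_last]
  have hcsjl : (jl.castSucc : Fin (n + 1)) = i1 := by ext; simp [hjl, hi1]
  -- values of br on the two interesting basis tuples
  have hbr1 : br (b ∘ i1.succAbove) = b i1 := by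
    rw [hbr]; simp [hi1]
  have hbrlast : br (b ∘ lastI.succAbove) = α • b lastI := by
    rw [hbr]
    have h1 : ((lastI : Fin (n+1)) : ℕ) = n := by simp [hlastI]
    rw [h1]
    have : ¬ (n = n - 1) := by omega
    simp [this]
  have hbr0 : ∀ m : Fin (n + 1), (m : ℕ) < n - 1 → br (b ∘ m.succAbove) = 0 := by
    intro m hm
    rw [hbr]
    have h1 : ¬ ((m : ℕ) = n - 1) := by omega
    have h2 : ¬ ((m : ℕ) = n) := by omega
    simp [h1, h2]
  -- the two key tuple identities
  have hupd1 : Function.update (b ∘ i1.succAbove) jl (b i1) = b ∘ lastI.succAbove := by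
    funext p
    by_cases hp : p = jl
    · subst hp; rw [Function.update_self]
      simp only [Function.comp_apply, hsalast, hcsjl]
    · rw [Function.update_of_ne hp]
      simp only [Function.comp_apply, hsa1' p hp, hsalast]
  have hupd2 : Function.update (b ∘ lastI.succAbove) jl (b lastI) = b ∘ i1.succAbove := by
    funext p
    by_cases hp : p = jl
    · subst hp; rw [Function.update_self]
      simp only [Function.comp_apply, hsa1]
    · rw [Function.update_of_ne hp]
      simp only [Function.comp_apply, hsa1' p hp, hsalast]
  -- vanishing of br on updated tuples, replaced entry = b i, position ≠ jl
  have hvanish : ∀ (i : Fin (n + 1)) (j : Fin n), j ≠ jl → (i:ℕ) = n - 1 ∨ (i:ℕ) = n →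
      br (Function.update (b ∘ i.succAbove) j (b i)) = 0 := by
    intro i j hj hi
    have hcomp : Function.update (b ∘ i.succAbove) j (b i)
        = b ∘ (Function.update i.succAbove j i) := by
      rw [Function.comp_update]
    rw [hcomp]
    have hjlt : (j : ℕ) < n - 1 := by
      have := j.isLt
      have : (j : ℕ) ≠ n - 1 := fun h => hj (by ext; simp [hjl, h])
      omega
    have hmlt : ((i.succAbove j : Fin (n+1)) : ℕ) < n - 1 := by
      rcases Nat.lt_or_ge (((j : Fin n).castSucc : Fin (n+1)) : ℕ) (i : ℕ) with h | h
      · rw [Fin.succAbove_of_castSucc_lt _ _ (by rwa [Fin.lt_def])]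
        simpa using hjlt
      · exfalso
        simp only [Fin.coe_castSucc] at h
        omega
    apply br_comp_eq_zero_aux b br _ _ _ _ (hbr0 _ hmlt)
    · intro p q hpq
      rcases eq_or_ne p j with hp | hp <;> rcases eq_or_ne q j with hq | hq
      · rw [hp, hq]
      · exfalso
        rw [hp, Function.update_self, Function.update_of_ne hq] at hpq
        exact Fin.ne_succAbove i q hpq
      · exfalso
        rw [hq, Function.update_self, Function.update_of_ne hp] at hpq
        exact Fin.succAbove_ne i p hpq
      · rw [Function.update_of_ne hp, Function.update_of_ne hq] at hpq
        exact Fin.succAbove_right_injective hpq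
    · intro p
      rcases eq_or_ne p j with hp | hp
      · rw [hp, Function.update_self]
        exact Fin.ne_succAbove i j
      · rw [Function.update_of_ne hp]
        exact fun h => hp (Fin.succAbove_right_injective h)
  -- key coordinate computations
  have key1 : ∀ (j : Fin n) (k : Fin (n + 1)),
      b.repr (br (Function.update (b ∘ i1.succAbove) j (b k))) lastI
        = if j = jl ∧ k = i1 then α else 0 := by
    intro j k
    by_cases hk : k = i1
    · subst hk
      by_cases hj : j = jl
      · subst hj
        rw [hupd1, hbrlast]
        simp [Module.Basis.repr_self]
      · rw [hvanish i1 j hj (Or.inl (by simp [hi1]))]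
        simp [hj]
    · have hcond : ¬ (j = jl ∧ k = i1) := fun h => hk h.2
      rw [if_neg hcond]
      obtain ⟨j', hj'⟩ := Fin.exists_succAbove_eq (show k ≠ i1 from hk)
      rcases eq_or_ne j' j with hjj | hjj
      · subst hjj
        rw [← hj']
        rw [show b (i1.succAbove j') = (b ∘ i1.succAbove) j' from rfl,
          Function.update_eq_self, hbr1]
        simp [Module.Basis.repr_self, Finsupp.single_apply, hi1last]
      · have hv : br (Function.update (b ∘ i1.succAbove) j (b k)) = 0 := by
          apply br.map_eq_zero_of_eq _ (i := j') (j := j) _ hjj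
          rw [Function.update_of_ne hjj, Function.update_self]
          simp only [Function.comp_apply, hj']
        rw [hv]
        simp
  have key2 : ∀ (j : Fin n) (k : Fin (n + 1)),
      b.repr (br (Function.update (b ∘ lastI.succAbove) j (b k))) i1
        = if j = jl ∧ k = lastI then 1 else 0 := by
    intro j k
    by_cases hk : k = lastI
    · subst hk
      by_cases hj : j = jl
      · subst hj
        rw [hupd2, hbr1]
        simp [Module.Basis.repr_self]
      · rw [hvanish lastI j hj (Or.inr (by simp [hlastI]))]
        simp [hj]
    · have hcond : ¬ (j = jl ∧ k = lastI) := fun h => hk h.2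
      rw [if_neg hcond]
      obtain ⟨j', hj'⟩ := Fin.exists_succAbove_eq (show k ≠ lastI from hk)
      rcases eq_or_ne j' j with hjj | hjj
      · subst hjj
        rw [← hj']
        rw [show b (lastI.succAbove j') = (b ∘ lastI.succAbove) j' from rfl,
          Function.update_eq_self, hbrlast]
        simp [Module.Basis.repr_self, Finsupp.single_apply, Ne.symm hi1last]
      · have hv : br (Function.update (b ∘ lastI.succAbove) j (b k)) = 0 := by
          apply br.map_eq_zero_of_eq _ (i := j') (j := j) _ hjj
          rw [Function.update_of_ne hjj, Function.update_self]
          simp only [Function.comp_apply, hj']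
        rw [hv]
        simp
  -- expansion of the derivation identity in coordinates
  have expand : ∀ (i : Fin (n + 1)) (c : Fin (n + 1)),
      b.repr (φ (br (b ∘ i.succAbove))) c
        = δ * ∑ j : Fin n, ∑ k : Fin (n + 1),
            b.repr (φ (b (i.succAbove j))) k *
              b.repr (br (Function.update (b ∘ i.succAbove) j (b k))) c := by
    intro i c
    rw [hφ]
    rw [map_smul, Finsupp.smul_apply, smul_eq_mul]
    congr 1
    rw [map_sum, Finsupp.coe_finset_sum, Finset.sum_apply]
    apply Finset.sum_congr rfl
    intro j _
    have hx : φ ((b ∘ i.succAbove) j)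
        = ∑ k : Fin (n + 1), b.repr (φ (b (i.succAbove j))) k • b k :=
      (b.sum_repr _).symm
    rw [hx, br.map_update_sum, map_sum, Finsupp.coe_finset_sum, Finset.sum_apply]
    apply Finset.sum_congr rfl
    intro k _
    rw [br.map_update_smul, map_smul, Finsupp.smul_apply, smul_eq_mul]
  -- the two scalar equations
  set β : F := b.repr (φ (b i1)) lastI with hβ
  set B : F := b.repr (φ (b lastI)) i1 with hB
  have e1 : β = δ * (B * α) := by
    have h := expand i1 lastI
    rw [hbr1] at h
    rw [hβ, h]
    congr 1
    have : ∀ j : Fin n, ∑ k : Fin (n + 1),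
        b.repr (φ (b (i1.succAbove j))) k *
          b.repr (br (Function.update (b ∘ i1.succAbove) j (b k))) lastI
        = if j = jl then b.repr (φ (b (i1.succAbove j))) i1 * α else 0 := by
      intro j
      calc ∑ k : Fin (n + 1), b.repr (φ (b (i1.succAbove j))) k *
            b.repr (br (Function.update (b ∘ i1.succAbove) j (b k))) lastI
          = ∑ k : Fin (n + 1), if j = jl ∧ k = i1 then
              b.repr (φ (b (i1.succAbove j))) k * α else 0 := by
            apply Finset.sum_congr rfl
            intro k _
            rw [key1 j k, mul_ite, mul_zero]
        _ = _ := by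
            simp only [ite_and]
            by_cases hj : j = jl
            · simp [hj]
            · simp [hj]
    rw [Finset.sum_congr rfl (fun j _ => this j)]
    rw [Finset.sum_ite_eq' Finset.univ jl _]
    simp [hsa1, hB]
  have e2 : α * B = δ * β := by
    have h := expand lastI i1
    rw [hbrlast] at h
    rw [map_smul, map_smul, Finsupp.smul_apply, smul_eq_mul] at h
    have hsum : ∑ j : Fin n, ∑ k : Fin (n + 1),
        b.repr (φ (b (lastI.succAbove j))) k *
          b.repr (br (Function.update (⇑b ∘ lastI.succAbove) j (b k))) i1 = β := by
      have : ∀ j : Fin n, ∑ k : Fin (n + 1),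
          b.repr (φ (b (lastI.succAbove j))) k *
            b.repr (br (Function.update (⇑b ∘ lastI.succAbove) j (b k))) i1
          = if j = jl then b.repr (φ (b (lastI.succAbove j))) lastI else 0 := by
        intro j
        calc ∑ k : Fin (n + 1), b.repr (φ (b (lastI.succAbove j))) k *
              b.repr (br (Function.update (⇑b ∘ lastI.succAbove) j (b k))) i1
            = ∑ k : Fin (n + 1), if j = jl ∧ k = lastI then
                b.repr (φ (b (lastI.succAbove j))) k * 1 else 0 := by
              apply Finset.sum_congr rfl
              intro k _
              rw [key2 j k, mul_ite, mul_zero]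
          _ = _ := by
              simp only [ite_and, mul_one]
              by_cases hj : j = jl
              · simp [hj]
              · simp [hj]
      rw [Finset.sum_congr rfl (fun j _ => this j)]
      rw [Finset.sum_ite_eq' Finset.univ jl _]
      have hcs : lastI.succAbove jl = i1 := by rw [hsalast, hcsjl]
      simp [hcs, hβ]
    rw [hsum] at h
    exact h
  -- conclude
  have hsq : β = δ * (δ * β) := by linear_combination e1 + δ * e2
  have hprod : β * ((1 - δ) * (1 + δ)) = 0 := by linear_combination hsq
  have hne : (1 - δ) * (1 + δ) ≠ 0 := by
    apply mul_ne_zero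
    · exact sub_ne_zero.mpr (Ne.symm hδ1)
    · intro h
      exact hδ2 (by linear_combination h)
  have : β = 0 := by
    rcases mul_eq_zero.mp hprod with h | h
    · exact h
    · exact absurd h hne
  exact this
end

section
/- Let A be the (n+1)-dimensional n-ary algebra of type (D_r) (3 ≤ r ≤ n+1) over a field F, and φ a δ-derivation with matrix entries β_{ij}. If δ = -1, then for i, j ≤ r with i ≠ j one has β_{ij} = (-1)^{i-j} β_{ji}, and Σ_{j=1}^{n+1} β_{jj} = 0. -/
open Equiv Function

lemma aux_update_succAbove {F A : Type*} [Field F] [AddCommGroup A] [Module F A]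
    {n : ℕ} (f : AlternatingMap F A A (Fin n)) (v : Fin (n + 1) → A)
    (i : Fin (n + 1)) (k : Fin n) :
    f (Function.update (v ∘ i.succAbove) k (v i)) =
      ((-1 : F) ^ ((i : ℕ) + ((i.succAbove k : ℕ)) + 1)) • f (v ∘ (i.succAbove k).succAbove) := by
  set m := i.succAbove k with hm
  set τ : Equiv.Perm (Fin (n + 1)) :=
    m.cycleRange * i.cycleRange⁻¹ * Equiv.swap 0 k.succ with hτ
  have hτ0 : τ 0 = 0 := by
    simp only [hτ, Equiv.Perm.mul_apply, Equiv.swap_apply_left]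
    rw [show (i.cycleRange⁻¹ : Equiv.Perm (Fin (n+1))) k.succ = i.cycleRange.symm k.succ from rfl,
      Fin.cycleRange_symm_succ, ← hm, Fin.cycleRange_self]
  obtain ⟨p, σ, hτeq⟩ : ∃ p σ, τ = Equiv.Perm.decomposeFin.symm (p, σ) :=
    ⟨(Equiv.Perm.decomposeFin τ).1, (Equiv.Perm.decomposeFin τ).2, by
      rw [Prod.mk.eta, Equiv.symm_apply_apply]⟩
  have hp : p = 0 := by
    have h := hτ0
    rw [hτeq] at h
    simpa using h
  have hsucc : ∀ t : Fin n, τ t.succ = (σ t).succ := by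
    intro t
    conv_lhs => rw [hτeq]
    rw [Equiv.Perm.decomposeFin_symm_apply_succ, hp]
    simp
  have key : ∀ t : Fin n, m.succAbove (σ t) = i.cycleRange.symm (Equiv.swap 0 k.succ t.succ) := by
    intro t
    calc m.succAbove (σ t) = m.cycleRange.symm (σ t).succ := (Fin.cycleRange_symm_succ m (σ t)).symm
      _ = m.cycleRange.symm (τ t.succ) := by rw [hsucc t]
      _ = i.cycleRange.symm (Equiv.swap 0 k.succ t.succ) := by
          simp only [hτ, Equiv.Perm.mul_apply]
          rw [show ∀ x, m.cycleRange.symm (m.cycleRange x) = x from fun x => m.cycleRange.symm_apply_apply x]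
          rfl
  have hcomp : (v ∘ m.succAbove) ∘ σ = Function.update (v ∘ i.succAbove) k (v i) := by
    funext t
    rcases eq_or_ne t k with rfl | ht
    · simp only [Function.comp_apply, Function.update_self, key t, Equiv.swap_apply_right,
        Fin.cycleRange_symm_zero]
    · rw [Function.update_of_ne ht]
      simp only [Function.comp_apply, key t]
      rw [Equiv.swap_apply_of_ne_of_ne (Fin.succ_ne_zero t) (by simpa using ht),
        Fin.cycleRange_symm_succ]
  have hsign : Equiv.Perm.sign σ = (-1 : ℤˣ) ^ ((i : ℕ) + (m : ℕ) + 1) := by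
    have h1 : Equiv.Perm.sign τ = Equiv.Perm.sign σ := by
      conv_lhs => rw [hτeq]
      rw [Equiv.Perm.decomposeFin.symm_sign, hp, if_pos rfl, one_mul]
    have h2 : Equiv.Perm.sign τ = (-1 : ℤˣ) ^ ((i : ℕ) + (m : ℕ) + 1) := by
      simp only [hτ, map_mul, Fin.sign_cycleRange, map_inv,
        Equiv.Perm.sign_swap (Fin.succ_ne_zero k).symm]
      rw [show ((-1:ℤˣ)^(i:ℕ))⁻¹ = (-1:ℤˣ)^(i:ℕ) from by rw [← inv_pow]; norm_num,
        pow_add, pow_add, pow_one, mul_comm ((-1:ℤˣ) ^ (m:ℕ)) ((-1:ℤˣ) ^ (i:ℕ))]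
    rw [← h1, h2]
  rw [← hcomp, AlternatingMap.map_perm, hsign]
  rcases Nat.even_or_odd ((i : ℕ) + (m : ℕ) + 1) with he | he
  · rw [he.neg_one_pow, he.neg_one_pow, one_smul, one_smul]
  · rw [he.neg_one_pow, he.neg_one_pow, Units.smul_def]
    simp

/-- Type `(D_r)`, `δ = -1`: for `i ≠ j` in the top block, `β_{ij} = (-1)^{i-j} β_{ji}`,
and the trace `Σ_j β_{jj}` vanishes. -/
theorem antiderivation_Dr_matrix
    {F A : Type*} [Field F] [AddCommGroup A] [Module F A]
    {n r : ℕ} (hr3 : 3 ≤ r) (hrn : r ≤ n + 1)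
    (b : Module.Basis (Fin (n + 1)) F A)
    (br : AlternatingMap F A A (Fin n))
    (hbr : ∀ i : Fin (n + 1),
      br (b ∘ i.succAbove) = if (i : ℕ) < r then b i else 0)
    (φ : A →ₗ[F] A)
    (hφ : ∀ x : Fin n → A,
      φ (br x) = (-1 : F) • ∑ i, br (Function.update x i (φ (x i)))) :
    (∀ i j : Fin (n + 1), (i : ℕ) < r → (j : ℕ) < r → i ≠ j →
      b.repr (φ (b i)) j = (-1 : F) ^ ((i : ℕ) + (j : ℕ)) * b.repr (φ (b j)) i) ∧
    ∑ j : Fin (n + 1), b.repr (φ (b j)) j = 0 := by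
  have hmain : ∀ i : Fin (n + 1), (i : ℕ) < r →
      φ (b i) = (-1 : F) • ∑ k : Fin n,
        ((b.repr (φ (b (i.succAbove k))) (i.succAbove k)) • b i
          + (if ((i.succAbove k : ℕ)) < r then
              (b.repr (φ (b (i.succAbove k))) i * (-1:F)^((i:ℕ)+((i.succAbove k : ℕ))+1))
             else 0) • b (i.succAbove k)) := by
    intro i hi
    have h0 := hφ (b ∘ i.succAbove)
    rw [hbr i, if_pos hi] at h0
    rw [h0]
    congr 1
    apply Finset.sum_congr rfl
    intro k _
    have hbm : φ ((b ∘ i.succAbove) k) = ∑ j, b.repr (φ (b (i.succAbove k))) j • b j := by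
      rw [Function.comp_apply, Module.Basis.sum_repr]
    rw [hbm, br.map_update_sum]
    have hterm : ∀ j : Fin (n + 1),
        br (Function.update (b ∘ i.succAbove) k (b.repr (φ (b (i.succAbove k))) j • b j))
          = (if j = i.succAbove k then (b.repr (φ (b (i.succAbove k))) j) • b i else 0)
            + (if j = i then
                (if ((i.succAbove k : ℕ)) < r then
                  (b.repr (φ (b (i.succAbove k))) j * (-1:F)^((i:ℕ)+((i.succAbove k : ℕ))+1))
                 else 0) • b (i.succAbove k)
               else 0) := by
      intro j
      rw [AlternatingMap.map_update_smul]
      rcases eq_or_ne j (i.succAbove k) with hj | hj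
      · rw [if_pos hj, if_neg (by rw [hj]; exact Fin.succAbove_ne i k), add_zero, hj]
        have hupd : Function.update (b ∘ i.succAbove) k (b (i.succAbove k)) = b ∘ i.succAbove := by
          have : b (i.succAbove k) = (b ∘ i.succAbove) k := rfl
          rw [this, Function.update_eq_self]
        rw [hupd, hbr i, if_pos hi]
      rcases eq_or_ne j i with hj2 | hj2
      · rw [if_neg hj, if_pos hj2, zero_add, hj2]
        rw [aux_update_succAbove br b i k, smul_smul, hbr (i.succAbove k)]
        split_ifs with h
        · rfl
        · rw [smul_zero, zero_smul]
      · rw [if_neg hj, if_neg hj2, add_zero]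
        obtain ⟨k', hk'⟩ := Fin.exists_succAbove_eq hj2
        have hk'k : k' ≠ k := fun h => hj (by rw [← hk', h])
        have hzero : br (Function.update (⇑b ∘ i.succAbove) k (b j)) = 0 := by
          refine br.map_eq_zero_of_eq _ (i := k') (j := k) ?_ hk'k
          rw [Function.update_of_ne hk'k, Function.update_self, Function.comp_apply, hk']
        rw [hzero, smul_zero]
    rw [Finset.sum_congr rfl (fun j _ => hterm j), Finset.sum_add_distrib,
      Finset.sum_ite_eq' Finset.univ (i.succAbove k), Finset.sum_ite_eq' Finset.univ i,
      if_pos (Finset.mem_univ _), if_pos (Finset.mem_univ _)]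
  have hcoord : ∀ i : Fin (n + 1), (i : ℕ) < r → ∀ c : Fin (n + 1),
      b.repr (φ (b i)) c = (-1 : F) * ∑ k : Fin n,
        ((b.repr (φ (b (i.succAbove k))) (i.succAbove k)) * (if i = c then 1 else 0)
          + (if ((i.succAbove k : ℕ)) < r then
              (b.repr (φ (b (i.succAbove k))) i * (-1:F)^((i:ℕ)+((i.succAbove k:ℕ))+1)) else 0)
            * (if i.succAbove k = c then 1 else 0)) := by
    intro i hi c
    conv_lhs => rw [hmain i hi]
    simp only [map_smul, map_sum, map_add, Finsupp.smul_apply, Finsupp.coe_finset_sum,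
      Finset.sum_apply, Finsupp.coe_add, Pi.add_apply, Module.Basis.repr_self,
      Finsupp.single_apply, smul_eq_mul]
  constructor
  · intro i j hi hj hij
    have h := hcoord i hi j
    obtain ⟨k0, hk0⟩ := Fin.exists_succAbove_eq (Ne.symm hij)
    simp only [if_neg hij, mul_zero, zero_add] at h
    rw [Finset.sum_eq_single k0 (fun k _ hk => by
        rw [if_neg (fun hh : i.succAbove k = j => hk (Fin.succAbove_right_injective
          (hh.trans hk0.symm))), mul_zero])
      (fun hk => absurd (Finset.mem_univ k0) hk)] at h
    rw [hk0, if_pos rfl, mul_one, if_pos hj] at h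
    rw [h, pow_succ]
    ring
  · have h0r : (0:ℕ) < r := by omega
    have hn0 : (0:ℕ) < n + 1 := by omega
    set i0 : Fin (n + 1) := ⟨0, hn0⟩ with hi0
    have h := hcoord i0 h0r i0
    have hne : ∀ k : Fin n, (if i0.succAbove k = i0 then (1:F) else 0) = 0 :=
      fun k => if_neg (Fin.succAbove_ne i0 k)
    simp only [eq_self_iff_true, if_true, mul_one, hne, mul_zero, add_zero] at h
    rw [Fin.sum_univ_succAbove (fun j => b.repr (φ (b j)) j) i0, h]
    ring
end

section
/- Let A be the (n+1)-dimensional n-ary algebra of type (D_r) with r ≤ n over a field F, and φ a δ-derivation with matrix entries β_{ij}. Then β_{ji} = 0 for all i > r and j ≤ r. -/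
/-- Type `(D_r)` with `r ≤ n`: `β_{ji} = 0` for all `i > r` and `j ≤ r`. -/
theorem delta_derivation_Dr_lower_block_zero
    {F A : Type*} [Field F] [AddCommGroup A] [Module F A]
    {n r : ℕ} (hr3 : 3 ≤ r) (hrn : r ≤ n)
    (b : Module.Basis (Fin (n + 1)) F A)
    (br : AlternatingMap F A A (Fin n))
    (hbr : ∀ i : Fin (n + 1),
      br (b ∘ i.succAbove) = if (i : ℕ) < r then b i else 0)
    (δ : F)
    (φ : A →ₗ[F] A)
    (hφ : ∀ x : Fin n → A,
      φ (br x) = δ • ∑ i, br (Function.update x i (φ (x i)))) :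
    ∀ i j : Fin (n + 1), r ≤ (i : ℕ) → (j : ℕ) < r →
      b.repr (φ (b j)) i = 0 := by
  intro i j hi hj
  -- Key: for ANY map g : Fin n → Fin (n+1), the bracket of b ∘ g has zero
  -- coefficient at index i (since i ≥ r).
  have key : ∀ g : Fin n → Fin (n + 1), b.repr (br (b ∘ g)) i = 0 := by
    intro g
    by_cases hg : Function.Injective g
    · -- find an element missed by g
      have hns : ¬ Function.Surjective g := by
        intro hs
        have := Fintype.card_le_of_surjective g hs
        simp at this
      obtain ⟨m, hm⟩ : ∃ m : Fin (n + 1), ∀ k, g k ≠ m := by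
        simp only [Function.Surjective, not_forall] at hns
        obtain ⟨m, hm⟩ := hns
        exact ⟨m, fun k h => hm ⟨k, h⟩⟩
      choose σ hσ using fun k => Fin.exists_succAbove_eq (hm k)
      have hσinj : Function.Injective σ := by
        intro a c hac
        apply hg
        rw [← hσ a, ← hσ c, hac]
      have hσbij := Finite.injective_iff_bijective.mp hσinj
      have hcomp : b ∘ g = (b ∘ m.succAbove) ∘ (Equiv.ofBijective σ hσbij) := by
        funext k
        simp [Function.comp, Equiv.ofBijective, hσ k]
      rw [hcomp, br.map_perm, hbr m]
      by_cases hm' : (m : ℕ) < r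
      · have hmi : m ≠ i := by
          intro h; subst h; omega
        simp [hm', Units.smul_def, map_zsmul, Finsupp.single_apply, hmi]
      · simp [hm']
    · obtain ⟨a, c, hac, hne⟩ := Function.not_injective_iff.mp hg
      have : (b ∘ g) a = (b ∘ g) c := by simp [Function.comp, hac]
      rw [br.map_eq_zero_of_eq _ this hne]
      simp
  -- Expanding any vector placed in one slot
  have key2 : ∀ (f : Fin n → Fin (n + 1)) (k : Fin n) (y : A),
      b.repr (br (Function.update (b ∘ f) k y)) i = 0 := by
    intro f k y
    have hy : Function.update (b ∘ f) k y
        = Function.update (b ∘ f) k (∑ t, b.repr y t • b t) := by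
      rw [b.sum_repr y]
    rw [hy]
    have := br.toMultilinearMap.map_update_sum Finset.univ k
      (fun t => b.repr y t • b t) (b ∘ f)
    rw [show br (Function.update (b ∘ f) k (∑ t, b.repr y t • b t))
        = ∑ t, br (Function.update (b ∘ f) k (b.repr y t • b t)) from this]
    rw [map_sum, Finsupp.finset_sum_apply]
    apply Finset.sum_eq_zero
    intro t _
    have hupd : Function.update (b ∘ f) k (b t) = b ∘ (Function.update f k t) := by
      funext k'
      by_cases h : k' = k
      · subst h; simp
      · simp [Function.update_of_ne h]
    rw [br.map_update_smul, map_smul, Finsupp.smul_apply, hupd, key]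
    simp
  -- Main computation
  have hbj : br (b ∘ j.succAbove) = b j := by
    rw [hbr j]; simp [hj]
  have h1 : φ (b j) = δ • ∑ k, br (Function.update (b ∘ j.succAbove) k
      (φ ((b ∘ j.succAbove) k))) := by
    rw [← hbj, hφ]
  rw [h1, map_smul, Finsupp.smul_apply, map_sum, Finsupp.finset_sum_apply]
  rw [Finset.sum_eq_zero (fun k _ => key2 _ k _)]
  simp
end

section
/- Let A be the (n+1)-dimensional n-ary algebra of type (D_{n+1}) over a field F of characteristic zero (the simple n-ary Filippov algebra, with [e_1,...,ê_i,...,e_{n+1}] = e_i for all i). Then the linear map φ defined by an antisymmetric-with-signs matrix: φ(e_i) = Σ_{j≠i} (-1)^{i-j} a_{ji} e_j + a_{ii} e_i, where a_{ij} = (-1)^{i-j} a_{ji} for i ≠ j and Σ_i a_{ii} = 0, is a (-1)-derivation (antiderivation) of A; in particular, A possesses nonzero antiderivations that are not in the centroid. -/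
open Finset

private lemma negpow {M : Type*} [Monoid M] [HasDistribNeg M] {a c : ℕ} (h : a % 2 = c % 2) :
    (-1 : M) ^ a = (-1 : M) ^ c := by
  rcases Nat.even_or_odd a with he | ho
  · have h1 := Nat.even_iff.1 he
    rw [he.neg_one_pow, (Nat.even_iff.2 (by omega)).neg_one_pow]
  · have h1 := Nat.odd_iff.1 ho
    rw [ho.neg_one_pow, (Nat.odd_iff.2 (by omega)).neg_one_pow]

private lemma succAbove_val {N : ℕ} (t : Fin (N + 1)) (j : Fin N) :
    ((t.succAbove j : Fin (N + 1)) : ℕ) = if (j : ℕ) < (t : ℕ) then (j : ℕ) else (j : ℕ) + 1 := by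
  rcases lt_or_ge (j : ℕ) (t : ℕ) with h | h
  · rw [Fin.succAbove_of_castSucc_lt _ _ (by simpa [Fin.lt_def] using h), if_pos h]; rfl
  · rw [Fin.succAbove_of_le_castSucc _ _ (by simpa [Fin.le_def] using h), if_neg (by omega)]; rfl

private lemma cycleRange_val {N : ℕ} (t j : Fin (N + 1)) :
    ((t.cycleRange j : Fin (N + 1)) : ℕ) =
      if (j : ℕ) < (t : ℕ) then (j : ℕ) + 1 else if (j : ℕ) = (t : ℕ) then 0 else (j : ℕ) := by
  rcases lt_trichotomy (j : ℕ) (t : ℕ) with h | h | h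
  · rw [Fin.coe_cycleRange_of_lt (Fin.lt_def.2 h), if_pos h]
  · rw [Fin.cycleRange_of_eq (Fin.ext h), if_neg (by omega), if_pos h]; rfl
  · rw [Fin.cycleRange_of_gt (Fin.lt_def.2 h), if_neg (by omega), if_neg (by omega)]

private lemma cycleRange_inv_val {N : ℕ} (t w : Fin (N + 1)) :
    (((t.cycleRange)⁻¹ w : Fin (N + 1)) : ℕ) =
      if (w : ℕ) = 0 then (t : ℕ) else if (w : ℕ) ≤ (t : ℕ) then (w : ℕ) - 1 else (w : ℕ) := by
  have h : t.cycleRange ((t.cycleRange)⁻¹ w) = w := (t.cycleRange).apply_symm_apply w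
  have h' := congrArg Fin.val h
  rw [cycleRange_val] at h'
  set z := (t.cycleRange)⁻¹ w with hz
  have hzlt : (z : ℕ) < N + 1 := z.isLt
  have hwlt : (w : ℕ) < N + 1 := w.isLt
  have htlt : (t : ℕ) < N + 1 := t.isLt
  split_ifs at h' ⊢ <;> omega

private lemma perm_fact {N : ℕ} (k : Fin (N + 2)) (i : Fin (N + 1)) :
    ∃ π : Equiv.Perm (Fin (N + 1)),
      Function.update (k.succAbove) i k = (k.succAbove i).succAbove ∘ ⇑π ∧
      Equiv.Perm.sign π =
        (-1 : ℤˣ) ^ ((k : ℕ) + ((k.succAbove i : Fin (N + 2)) : ℕ) + 1) := by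
  have hm := succAbove_val k i
  set m := k.succAbove i with hmdef
  -- define p
  have hklt : (k : ℕ) < N + 2 := k.isLt
  have hilt : (i : ℕ) < N + 1 := i.isLt
  set pv : ℕ := if (i : ℕ) < (k : ℕ) then (k : ℕ) - 1 else (k : ℕ) with hpv
  have hpvlt : pv < N + 1 := by simp only [hpv]; split_ifs at hm ⊢ <;> omega
  set p : Fin (N + 1) := ⟨pv, hpvlt⟩ with hp
  refine ⟨(p.cycleRange)⁻¹ * i.cycleRange, ?_, ?_⟩
  · funext j
    apply Fin.ext
    simp only [Function.comp_apply, Equiv.Perm.mul_apply]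
    have hw := cycleRange_val i j
    have hz := cycleRange_inv_val p (i.cycleRange j)
    have hres := succAbove_val m ((p.cycleRange)⁻¹ (i.cycleRange j))
    rw [hres]
    have hppv : (p : ℕ) = pv := rfl
    have hjlt : (j : ℕ) < N + 1 := j.isLt
    have hzlt : (((p.cycleRange)⁻¹ (i.cycleRange j) : Fin (N+1)) : ℕ) < N + 1 :=
      ((p.cycleRange)⁻¹ (i.cycleRange j)).isLt
    rw [hppv] at hz
    rcases eq_or_ne j i with rfl | hne
    · rw [Function.update_self]
      simp only [hpv] at hz ⊢
      split_ifs at hm hw hz ⊢ <;> omega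
    · rw [Function.update_of_ne hne, succAbove_val]
      have hjne : (j : ℕ) ≠ (i : ℕ) := fun h => hne (Fin.ext h)
      simp only [hpv] at hz ⊢
      split_ifs at hm hw hz ⊢ <;> omega
  · rw [map_mul, map_inv, Fin.sign_cycleRange, Fin.sign_cycleRange]
    have hinv : ((-1 : ℤˣ) ^ (p : ℕ))⁻¹ = (-1 : ℤˣ) ^ (p : ℕ) :=
      inv_eq_of_mul_eq_one_left (Int.units_mul_self _)
    rw [hinv, ← pow_add]
    have hppv : (p : ℕ) = pv := rfl
    refine negpow ?_
    simp only [hppv, hpv]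
    split_ifs at hm ⊢ <;> omega

section

variable {F A : Type*} [Field F] [AddCommGroup A] [Module F A]

private lemma units_smul_eq {e : ℕ} (v : A) :
    ((-1 : ℤˣ) ^ e) • v = ((-1 : F) ^ e) • v := by
  rcases Nat.even_or_odd e with he | ho
  · rw [he.neg_one_pow, he.neg_one_pow, one_smul, one_smul]
  · rw [ho.neg_one_pow, ho.neg_one_pow, Units.smul_def, Units.val_neg, Units.val_one,
      neg_one_zsmul, neg_one_smul]

private lemma term_val {N : ℕ} (b : Module.Basis (Fin (N + 2)) F A)
    (br : AlternatingMap F A A (Fin (N + 1)))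
    (hbr : ∀ i : Fin (N + 2), br (b ∘ i.succAbove) = b i)
    (k : Fin (N + 2)) (i : Fin (N + 1)) :
    br (b ∘ Function.update (k.succAbove) i k) =
      ((-1 : F) ^ ((k : ℕ) + ((k.succAbove i : Fin (N + 2)) : ℕ) + 1)) • b (k.succAbove i) := by
  obtain ⟨π, hπ, hsign⟩ := perm_fact k i
  rw [hπ]
  have : b ∘ ((k.succAbove i).succAbove ∘ ⇑π) = (b ∘ (k.succAbove i).succAbove) ∘ ⇑π := rfl
  rw [this, br.map_perm, hsign, hbr, units_smul_eq (F := F)]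

private lemma zero_term {N : ℕ} (b : Module.Basis (Fin (N + 2)) F A)
    (br : AlternatingMap F A A (Fin (N + 1)))
    (hbr : ∀ i : Fin (N + 2), br (b ∘ i.succAbove) = b i)
    (k : Fin (N + 2)) (i i' : Fin (N + 1)) :
    br (b ∘ Function.update (k.succAbove) i (k.succAbove i')) =
      if i' = i then b k else 0 := by
  rcases eq_or_ne i' i with rfl | hne
  · rw [if_pos rfl, Function.update_eq_self, hbr]
  · rw [if_neg hne]
    refine br.map_eq_zero_of_eq _ (?_ : _ = _) hne.symm
    show b (Function.update (k.succAbove) i (k.succAbove i') i)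
        = b (Function.update (k.succAbove) i (k.succAbove i') i')
    rw [Function.update_self, Function.update_of_ne hne]

private lemma key {n : ℕ} (hn : 2 ≤ n) (b : Module.Basis (Fin (n + 1)) F A)
    (br : AlternatingMap F A A (Fin n))
    (hbr : ∀ i : Fin (n + 1), br (b ∘ i.succAbove) = b i)
    (a : Fin (n + 1) → Fin (n + 1) → F)
    (ha : ∀ i j : Fin (n + 1), i ≠ j → a i j = (-1 : F) ^ ((i : ℕ) + (j : ℕ)) * a j i)
    (htr : ∑ i : Fin (n + 1), a i i = 0)
    (φ : A →ₗ[F] A)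
    (hφ : φ = b.constr F (fun i : Fin (n + 1) => ∑ j, a i j • b j)) :
    ∀ x : Fin n → A,
      φ (br x) = (-1 : F) • ∑ i, br (Function.update x i (φ (x i))) := by
  obtain ⟨N, rfl⟩ : ∃ N, n = N + 1 := ⟨n - 1, by omega⟩
  classical
  have hφk : ∀ m, φ (b m) = ∑ j, a m j • b j := by
    intro m; rw [hφ, Module.Basis.constr_basis]
  set M : MultilinearMap F (fun _ : Fin (N + 1) => A) A :=
    ∑ i : Fin (N + 1), br.toMultilinearMap.compLinearMap
      (fun j => if j = i then φ else LinearMap.id) with hMdef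
  have hM : ∀ x : Fin (N + 1) → A, M x = ∑ i, br (Function.update x i (φ (x i))) := by
    intro x
    rw [hMdef, MultilinearMap.sum_apply]
    refine Finset.sum_congr rfl fun i _ => ?_
    rw [MultilinearMap.compLinearMap_apply]
    show br _ = _
    congr 1
    funext j
    rcases eq_or_ne j i with rfl | hne
    · simp
    · simp [hne, Function.update_of_ne hne]
  have hMalt : ∀ (x : Fin (N + 1) → A) (p q : Fin (N + 1)), x p = x q → p ≠ q → M x = 0 := by
    intro x p q hpq hne
    rw [hM]
    have hz : ∀ i ∈ (Finset.univ : Finset (Fin (N + 1))), i ∉ ({p, q} : Finset (Fin (N + 1))) →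
        br (Function.update x i (φ (x i))) = 0 := by
      intro i _ hi
      simp only [Finset.mem_insert, Finset.mem_singleton, not_or] at hi
      refine br.map_eq_zero_of_eq _ (?_ : _ = _) hne
      show Function.update x i (φ (x i)) p = Function.update x i (φ (x i)) q
      rw [Function.update_of_ne (Ne.symm hi.1), Function.update_of_ne (Ne.symm hi.2), hpq]
    rw [← Finset.sum_subset (Finset.subset_univ ({p, q} : Finset (Fin (N + 1)))) hz,
      Finset.sum_pair hne]
    have hswap : Function.update x q (φ (x q)) =
        (Function.update x p (φ (x p))) ∘ (Equiv.swap p q) := by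
      funext r
      rcases eq_or_ne r p with rfl | hrp
      · rw [Function.comp_apply, Equiv.swap_apply_left, Function.update_of_ne hne.symm,
          Function.update_of_ne hne, hpq]
      · rcases eq_or_ne r q with rfl | hrq
        · rw [Function.comp_apply, Equiv.swap_apply_right, Function.update_self,
            Function.update_self, hpq]
        · rw [Function.comp_apply, Equiv.swap_apply_of_ne_of_ne hrp hrq,
            Function.update_of_ne hrq, Function.update_of_ne hrp]
    rw [hswap, br.map_swap _ hne]
    exact add_neg_cancel _
  set R : AlternatingMap F A A (Fin (N + 1)) :=
    ⟨M, fun v i j h hij => hMalt v i j h hij⟩ with hRdef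
  have hR : ∀ x, R x = ∑ i, br (Function.update x i (φ (x i))) := fun x => hM x
  -- the canonical identity
  have hcan : ∀ k : Fin (N + 2),
      (φ.compAlternatingMap br) (b ∘ k.succAbove) = ((-1 : F) • R) (b ∘ k.succAbove) := by
    intro k
    rw [LinearMap.compAlternatingMap_apply, AlternatingMap.smul_apply, hbr, hφk, hR]
    have hupd : ∀ (i : Fin (N + 1)) (j : Fin (N + 2)),
        Function.update (b ∘ k.succAbove) i (b j) = b ∘ Function.update (k.succAbove) i j := by
      intro i j
      funext t
      rcases eq_or_ne t i with rfl | hne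
      · simp
      · simp [Function.update_of_ne hne]
    have hterm : ∀ i : Fin (N + 1),
        br (Function.update (b ∘ k.succAbove) i (φ ((b ∘ k.succAbove) i))) =
          a (k.succAbove i) k •
            (((-1 : F) ^ ((k : ℕ) + ((k.succAbove i : Fin (N + 2)) : ℕ) + 1)) • b (k.succAbove i))
            + a (k.succAbove i) (k.succAbove i) • b k := by
      intro i
      have : φ ((b ∘ k.succAbove) i) = ∑ j, a (k.succAbove i) j • b j := hφk _
      rw [this, br.map_update_sum]
      have h1 : ∀ j, br (Function.update (b ∘ k.succAbove) i (a (k.succAbove i) j • b j))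
          = a (k.succAbove i) j • br (b ∘ Function.update (k.succAbove) i j) := by
        intro j
        rw [br.map_update_smul, hupd]
      rw [Finset.sum_congr rfl fun j _ => h1 j, Fin.sum_univ_succAbove
        (fun j => a (k.succAbove i) j • br (b ∘ Function.update (k.succAbove) i j)) k]
      rw [term_val b br hbr k i]
      congr 1
      have h2 : ∀ i', a (k.succAbove i) (k.succAbove i') •
          br (b ∘ Function.update (k.succAbove) i (k.succAbove i'))
          = if i' = i then a (k.succAbove i) (k.succAbove i') • b k else 0 := by
        intro i'
        rw [zero_term b br hbr k i i']
        split_ifs with h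
        · rfl
        · rw [smul_zero]
      rw [Finset.sum_congr rfl fun i' _ => h2 i', Finset.sum_ite_eq' Finset.univ i
        (fun i' => a (k.succAbove i) (k.succAbove i') • b k), if_pos (Finset.mem_univ i)]
    rw [Finset.sum_congr rfl fun i _ => hterm i, Finset.smul_sum]
    have h3 : ∀ i : Fin (N + 1),
        (-1 : F) • (a (k.succAbove i) k •
            (((-1 : F) ^ ((k : ℕ) + ((k.succAbove i : Fin (N + 2)) : ℕ) + 1)) • b (k.succAbove i))
            + a (k.succAbove i) (k.succAbove i) • b k)
          = a k (k.succAbove i) • b (k.succAbove i)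
            + (-(a (k.succAbove i) (k.succAbove i))) • b k := by
      intro i
      rw [smul_add]
      congr 1
      · rw [smul_smul, smul_smul, ha k (k.succAbove i) (Fin.succAbove_ne k i).symm, pow_succ]
        congr 1
        ring
      · rw [smul_smul]
        congr 1
        ring
    rw [Finset.sum_congr rfl fun i _ => h3 i, Finset.sum_add_distrib, ← Finset.sum_smul]
    have htr' : (∑ i : Fin (N + 1), -(a (k.succAbove i) (k.succAbove i))) = a k k := by
      rw [Fin.sum_univ_succAbove (fun j => a j j) k] at htr
      simp only [Finset.sum_neg_distrib]
      exact neg_eq_of_add_eq_zero_left htr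
    rw [htr', Fin.sum_univ_succAbove (fun j => a k j • b j) k, add_comm]
  -- extension to all tuples
  have main : φ.compAlternatingMap br = (-1 : F) • R := by
    apply Module.Basis.ext_alternating b
    intro v hv
    have hsur : ¬ Function.Surjective v := by
      intro hs
      have := Fintype.card_le_of_surjective v hs
      simp [Fintype.card_fin] at this
    obtain ⟨k, hk⟩ : ∃ k : Fin (N + 2), ∀ t, v t ≠ k := by
      by_contra h
      push_neg at h
      exact hsur fun k => h k
    choose τ hτ using fun t => Fin.exists_succAbove_eq (hk t)
    have hτinj : Function.Injective τ := by
      intro s t hst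
      apply hv
      rw [← hτ s, ← hτ t, hst]
    have hτbij := Finite.injective_iff_bijective.1 hτinj
    have hfun : (fun t => b (v t)) = (b ∘ k.succAbove) ∘ ⇑(Equiv.ofBijective τ hτbij) := by
      funext t
      show b (v t) = b (k.succAbove (τ t))
      rw [hτ t]
    show (φ.compAlternatingMap br) (fun t => b (v t)) = ((-1 : F) • R) (fun t => b (v t))
    rw [hfun, (φ.compAlternatingMap br).map_perm, ((-1 : F) • R).map_perm, hcan k]
  intro x
  have := DFunLike.congr_fun main x
  rw [LinearMap.compAlternatingMap_apply, AlternatingMap.smul_apply, hR] at this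
  exact this

end

/-- Type `(D_{n+1})` (the simple Filippov algebra): every matrix `a` with
`a_{ij} = (-1)^{i-j} a_{ji}` (`i ≠ j`) and zero trace defines a `(-1)`-derivation
(antiderivation); in particular there exist nonzero antiderivations not lying in
the centroid. -/
theorem simple_Filippov_antiderivations
    {F A : Type*} [Field F] [CharZero F] [AddCommGroup A] [Module F A]
    {n : ℕ} (hn : 2 ≤ n)
    (b : Module.Basis (Fin (n + 1)) F A)
    (br : AlternatingMap F A A (Fin n))
    (hbr : ∀ i : Fin (n + 1), br (b ∘ i.succAbove) = b i)
    (a : Fin (n + 1) → Fin (n + 1) → F)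
    (ha : ∀ i j : Fin (n + 1), i ≠ j →
      a i j = (-1 : F) ^ ((i : ℕ) + (j : ℕ)) * a j i)
    (htr : ∑ i : Fin (n + 1), a i i = 0)
    (φ : A →ₗ[F] A)
    (hφ : φ = b.constr F (fun i : Fin (n + 1) => ∑ j, a i j • b j)) :
    (∀ x : Fin n → A,
      φ (br x) = (-1 : F) • ∑ i, br (Function.update x i (φ (x i)))) ∧
    ∃ ψ : A →ₗ[F] A, ψ ≠ 0 ∧
      (∀ x : Fin n → A,
        ψ (br x) = (-1 : F) • ∑ i, br (Function.update x i (ψ (x i)))) ∧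
      ¬ (∀ (i : Fin n) (x : Fin n → A),
        ψ (br x) = br (Function.update x i (ψ (x i)))) := by
  classical
  refine ⟨key hn b br hbr a ha htr φ hφ, ?_⟩
  set d : Fin (n + 1) → F := fun i => if i = 0 then 1 else if i = 1 then -1 else 0 with hd
  set a' : Fin (n + 1) → Fin (n + 1) → F := fun i j => if j = i then d i else 0 with ha'def
  have h01 : ((1 : Fin (n + 1)) : ℕ) = 1 := by
    rw [Fin.val_one']
    exact Nat.mod_eq_of_lt (by omega)
  have hne01 : (0 : Fin (n + 1)) ≠ 1 := by
    intro h
    have := congrArg Fin.val h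
    rw [Fin.val_zero, h01] at this
    omega
  have ha' : ∀ i j : Fin (n + 1), i ≠ j →
      a' i j = (-1 : F) ^ ((i : ℕ) + (j : ℕ)) * a' j i := by
    intro i j hij
    simp [ha'def, hij, Ne.symm hij]
  have htr' : ∑ i : Fin (n + 1), a' i i = 0 := by
    have hsplit : ∀ i : Fin (n + 1),
        a' i i = (if i = 0 then (1 : F) else 0) + (if i = 1 then (-1 : F) else 0) := by
      intro i
      rcases eq_or_ne i 0 with rfl | h0
      · simp [ha'def, hd, hne01]
      · rcases eq_or_ne i 1 with rfl | h1
        · simp [ha'def, hd, h0]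
        · simp [ha'def, hd, h0, h1]
    rw [Finset.sum_congr rfl fun i _ => hsplit i, Finset.sum_add_distrib,
      Finset.sum_ite_eq' Finset.univ (0 : Fin (n + 1)) (fun _ => (1 : F)),
      Finset.sum_ite_eq' Finset.univ (1 : Fin (n + 1)) (fun _ => (-1 : F))]
    simp
  set ψ : A →ₗ[F] A := b.constr F (fun i => ∑ j, a' i j • b j) with hψ
  have hψ0 : ψ (b 0) = b 0 := by
    rw [hψ, Module.Basis.constr_basis]
    have h1 : ∀ j, a' 0 j • b j = if j = 0 then b j else 0 := by
      intro j
      rcases eq_or_ne j 0 with rfl | hj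
      · simp [ha'def, hd]
      · simp [ha'def, hj]
    rw [Finset.sum_congr rfl fun j _ => h1 j,
      Finset.sum_ite_eq' Finset.univ (0 : Fin (n + 1)) (fun j => b j),
      if_pos (Finset.mem_univ _)]
  have hψ1 : ψ (b 1) = -(b 1) := by
    rw [hψ, Module.Basis.constr_basis]
    have h1 : ∀ j, a' 1 j • b j = if j = 1 then -(b j) else 0 := by
      intro j
      rcases eq_or_ne j 1 with rfl | hj
      · simp [ha'def, hd, Ne.symm hne01]
      · simp [ha'def, hj]
    rw [Finset.sum_congr rfl fun j _ => h1 j,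
      Finset.sum_ite_eq' Finset.univ (1 : Fin (n + 1)) (fun j => -(b j)),
      if_pos (Finset.mem_univ _)]
  refine ⟨ψ, ?_, key hn b br hbr a' ha' htr' ψ hψ, ?_⟩
  · intro h
    rw [h, LinearMap.zero_apply] at hψ0
    exact b.ne_zero 0 hψ0.symm
  · intro hcent
    have hn' : 0 < n := by omega
    set i0 : Fin n := ⟨0, hn'⟩ with hi0
    set x : Fin n → A := ⇑b ∘ (0 : Fin (n + 1)).succAbove with hx
    have hbrx : br x = b 0 := hbr 0
    have hxi0 : x i0 = b 1 := by
      show b ((0 : Fin (n + 1)).succAbove i0) = b 1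
      congr 1
      apply Fin.ext
      rw [succAbove_val, h01]
      simp [hi0]
    have h := hcent i0 x
    have hsm : ψ (x i0) = (-1 : F) • x i0 := by
      rw [hxi0, hψ1, neg_one_smul]
    rw [hbrx, hψ0, hsm, br.map_update_smul, Function.update_eq_self, hbrx,
      neg_one_smul] at h
    have h2 : b 0 + b 0 = 0 := by
      nth_rewrite 1 [h]
      exact neg_add_cancel _
    have h3 : (2 : F) • b 0 = 0 := by
      rw [two_smul]
      exact h2
    rcases smul_eq_zero.1 h3 with h4 | h4
    · exact (by norm_num : (2 : F) ≠ 0) h4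
    · exact b.ne_zero 0 h4
end

section
/- Let A be the simple (n+1)-dimensional n-ary Filippov algebra of type (D_{n+1}) over an algebraically closed field of characteristic zero, and let φ be a nonzero δ-derivation of A with δ ∉ {0, 1, -1, 1/n}. Then φ does not exist; i.e., every nonzero δ-derivation of A with δ ≠ 0,1 is either an antiderivation (δ = -1) or a (1/n)-derivation lying in the centroid (a scalar multiple of identity). -/
open Equiv

/-- The permutation of `Fin n` induced by `swap i k` on complements of `{i}` and `{k}`. -/
def swPerm {n : ℕ} (i k : Fin (n + 1)) : Equiv.Perm (Fin n) :=
  (finSuccAboveEquiv i).trans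
    (((Equiv.swap i k).subtypeEquiv (fun x => by
      constructor
      · intro hx hc
        apply hx
        have : x = Equiv.swap i k k := ((Equiv.swap i k).apply_eq_iff_eq_symm_apply.mp hc).trans
          (by rw [Equiv.symm_swap])
        rwa [Equiv.swap_apply_right] at this
      · intro hx hc
        exact hx (by rw [hc, Equiv.swap_apply_left]))).trans (finSuccAboveEquiv k).symm)

theorem swPerm_spec {n : ℕ} (i k : Fin (n + 1)) (j : Fin n) :
    k.succAbove (swPerm i k j) = Equiv.swap i k (i.succAbove j) := by
  have h : (finSuccAboveEquiv k (swPerm i k j) : Fin (n + 1)) = Equiv.swap i k (i.succAbove j) := by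
    simp [swPerm, finSuccAboveEquiv_apply, Equiv.subtypeEquiv_apply]
  simpa [finSuccAboveEquiv_apply] using h

theorem swPerm_symm {n : ℕ} (i k : Fin (n + 1)) :
    swPerm k i = (swPerm i k).symm := by
  have h : ∀ j, swPerm i k (swPerm k i j) = j := by
    intro j
    apply Fin.succAbove_right_injective (p := k)
    rw [swPerm_spec, swPerm_spec, Equiv.swap_comm k i, Equiv.swap_apply_self]
  refine Equiv.ext fun j => ?_
  rw [Equiv.eq_symm_apply, h j]

/-- The simple `(n+1)`-dimensional `n`-ary Filippov algebra (type `(D_{n+1})`)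
over an algebraically closed field of characteristic zero: every nonzero
`δ`-derivation with `δ ≠ 0, 1` is either an antiderivation (`δ = -1`) or a
`(1/n)`-derivation lying in the centroid (a scalar multiple of the identity). -/
theorem simple_Filippov_delta_derivations
    {F A : Type*} [Field F] [IsAlgClosed F] [CharZero F]
    [AddCommGroup A] [Module F A]
    {n : ℕ} (hn : 2 ≤ n)
    (b : Module.Basis (Fin (n + 1)) F A)
    (br : AlternatingMap F A A (Fin n))
    (hbr : ∀ i : Fin (n + 1), br (b ∘ i.succAbove) = b i)
    (δ : F) (hδ0 : δ ≠ 0) (hδ1 : δ ≠ 1)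
    (φ : A →ₗ[F] A) (hφ0 : φ ≠ 0)
    (hφ : ∀ x : Fin n → A,
      φ (br x) = δ • ∑ i, br (Function.update x i (φ (x i)))) :
    δ = -1 ∨ (δ = (n : F)⁻¹ ∧ ∃ c : F, ∀ x : A, φ x = c • x) := by
  classical
  set a : Fin (n + 1) → Fin (n + 1) → F := fun k s => b.repr (φ (b s)) k with ha
  set ε : Fin (n + 1) → Fin (n + 1) → F :=
    fun i k => (((Equiv.Perm.sign (swPerm i k) : ℤˣ) : ℤ) : F) with hε
  -- ε is an involution-like sign
  have hεmul : ∀ i k, ε i k * ε k i = 1 := by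
    intro i k
    have hsym : Equiv.Perm.sign (swPerm k i) = Equiv.Perm.sign (swPerm i k) := by
      rw [swPerm_symm i k, Equiv.Perm.sign_symm]
    rcases Int.units_eq_one_or (Equiv.Perm.sign (swPerm i k)) with h | h <;>
      simp [hε, hsym, h]
  -- the value of br on updated basis tuples
  have key : ∀ (i : Fin (n + 1)) (m : Fin n) (k : Fin (n + 1)),
      br (Function.update (b ∘ i.succAbove) m (b k)) =
        (if k = i.succAbove m then b i else 0) +
          (if k = i then ε i (i.succAbove m) • b (i.succAbove m) else 0) := by
    intro i m k
    by_cases h1 : k = i.succAbove m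
    · subst h1
      rw [if_pos rfl, if_neg (Fin.succAbove_ne i m), add_zero]
      have hupd : Function.update (b ∘ i.succAbove) m (b (i.succAbove m)) = b ∘ i.succAbove := by
        funext l
        by_cases hl : l = m
        · subst hl; simp
        · rw [Function.update_of_ne hl]
      rw [hupd, hbr]
    · by_cases h2 : k = i
      · subst h2
        rw [if_neg h1, if_pos rfl, zero_add]
        have hik : Function.update (b ∘ k.succAbove) m (b k) =
            (b ∘ (k.succAbove m).succAbove) ∘ (swPerm k (k.succAbove m)) := by
          funext l
          have hsw : (k.succAbove m).succAbove (swPerm k (k.succAbove m) l) =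
              Equiv.swap k (k.succAbove m) (k.succAbove l) := swPerm_spec _ _ _
          by_cases hl : l = m
          · subst hl
            simp only [Function.update_self, Function.comp_apply, hsw,
              Equiv.swap_apply_right]
          · rw [Function.update_of_ne hl]
            have h3 : k.succAbove l ≠ k := Fin.succAbove_ne k l
            have h4 : k.succAbove l ≠ k.succAbove m :=
              fun hc => hl (Fin.succAbove_right_injective hc)
            simp only [Function.comp_apply, hsw, Equiv.swap_apply_of_ne_of_ne h3 h4]
        rw [hik, AlternatingMap.map_perm, hbr]
        rw [Units.smul_def, ← Int.cast_smul_eq_zsmul F]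
      · -- k different from both: repeated entry
        obtain ⟨m', hm'⟩ := Fin.exists_succAbove_eq h2
        have hmm : m' ≠ m := by
          intro hc; exact h1 (by rw [← hm', hc])
        rw [if_neg h1, if_neg h2, add_zero]
        refine br.map_eq_zero_of_eq _ ?_ hmm
        rw [Function.update_of_ne hmm, Function.update_self, Function.comp_apply, hm']
  -- main structural equation
  have E : ∀ i : Fin (n + 1), φ (b i) =
      δ • ∑ m : Fin n, (a (i.succAbove m) (i.succAbove m) • b i +
        a i (i.succAbove m) • ε i (i.succAbove m) • b (i.succAbove m)) := by
    intro i
    have h0 := hφ (b ∘ i.succAbove)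
    rw [hbr] at h0
    have hsum : ∀ m : Fin n,
        br (Function.update (b ∘ i.succAbove) m (φ ((b ∘ i.succAbove) m))) =
          a (i.succAbove m) (i.succAbove m) • b i +
            a i (i.succAbove m) • ε i (i.succAbove m) • b (i.succAbove m) := by
      intro m
      have hrepr : φ ((b ∘ i.succAbove) m) = ∑ k, a k (i.succAbove m) • b k :=
        (b.sum_repr (φ (b (i.succAbove m)))).symm
      rw [hrepr, AlternatingMap.map_update_sum]
      have hterm : ∀ k : Fin (n + 1),
          br (Function.update (b ∘ i.succAbove) m (a k (i.succAbove m) • b k)) =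
            (if k = i.succAbove m then a k (i.succAbove m) • b i else 0) +
              (if k = i then a k (i.succAbove m) • ε i (i.succAbove m) • b (i.succAbove m)
                else 0) := by
        intro k
        rw [AlternatingMap.map_update_smul, key, smul_add]
        congr 1 <;> split <;> simp
      rw [Finset.sum_congr rfl fun k _ => hterm k, Finset.sum_add_distrib,
        Finset.sum_ite_eq' Finset.univ (i.succAbove m), Finset.sum_ite_eq' Finset.univ i]
      simp
    rw [Finset.sum_congr rfl fun m _ => hsum m] at h0
    exact h0
  -- diagonal coordinates
  have diag : ∀ i : Fin (n + 1), a i i = δ * ∑ m : Fin n, a (i.succAbove m) (i.succAbove m) := by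
    intro i
    have h0 := congrArg (fun v => b.repr v i) (E i)
    simpa [ha, Finsupp.single_apply, Fin.succAbove_ne, Finset.mul_sum] using h0
  -- off-diagonal coordinates
  have offdiag : ∀ i t : Fin (n + 1), t ≠ i → a t i = δ * (ε i t * a i t) := by
    intro i t h
    obtain ⟨m0, hm0⟩ := Fin.exists_succAbove_eq h
    have h0 := congrArg (fun v => b.repr v t) (E i)
    simp only [ha, map_smul, map_sum, map_add, Finsupp.smul_apply, Finsupp.coe_finset_sum,
      Finset.sum_apply, Finsupp.add_apply, Module.Basis.repr_self, Finsupp.single_apply,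
      smul_eq_mul] at h0
    have hit : ¬ (i = t) := fun hc => h hc.symm
    rw [Finset.sum_eq_single m0
      (fun m _ hm => by
        have hne : i.succAbove m ≠ t := fun hc => hm (by
          apply Fin.succAbove_right_injective (p := i); rw [hc, hm0])
        simp [hit, hne])
      (fun hmem => absurd (Finset.mem_univ m0) hmem)] at h0
    rw [hm0] at h0
    simp only [hit, if_false, if_pos rfl, if_true, mul_zero, zero_mul, zero_add,
      mul_one, ha] at h0 ⊢
    rw [h0]; ring
  by_cases hδm1 : δ = -1
  · exact Or.inl hδm1
  right
  have hne1 : (1 : F) + δ ≠ 0 := fun hc => hδm1 (by linear_combination hc)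
  -- off-diagonal entries vanish
  have hoff : ∀ i t : Fin (n + 1), t ≠ i → a t i = 0 := by
    intro i t h
    have h1 := offdiag i t h
    have h2 := offdiag t i (fun hc => h hc.symm)
    have h3 : a t i = (δ * δ) * a t i := by
      calc a t i = δ * (ε i t * (δ * (ε t i * a t i))) := by
            conv_lhs => rw [h1, h2]
        _ = (δ * δ) * ((ε i t * ε t i) * a t i) := by ring
        _ = (δ * δ) * a t i := by rw [hεmul]; ring
    have h4 : (1 - δ * δ) * a t i = 0 := by linear_combination h3
    have h5 : (1 : F) - δ * δ ≠ 0 := by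
      intro hc
      have h6 : (δ - 1) * (δ + 1) = 0 := by linear_combination -hc
      rcases mul_eq_zero.mp h6 with h7 | h7
      · exact hδ1 (by linear_combination h7)
      · exact hδm1 (by linear_combination h7)
    exact (mul_eq_zero.mp h4).resolve_left h5
  -- all diagonal entries are equal
  set T : F := ∑ j, a j j with hT
  have hdiag2 : ∀ i, (1 + δ) * a i i = δ * T := by
    intro i
    have h1 := diag i
    have h2 : T = a i i + ∑ m, a (i.succAbove m) (i.succAbove m) :=
      Fin.sum_univ_succAbove (fun j => a j j) i
    linear_combination h1 - δ * h2
  set c : F := a 0 0 with hc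
  have hcc : ∀ i, a i i = c :=
    fun i => mul_left_cancel₀ hne1 ((hdiag2 i).trans (hdiag2 0).symm)
  -- φ is c • id
  have hφc : ∀ x : A, φ x = c • x := by
    have hφid : φ = c • (LinearMap.id : A →ₗ[F] A) := by
      apply b.ext
      intro j
      have hr : φ (b j) = ∑ k, a k j • b k := (b.sum_repr _).symm
      rw [hr, Finset.sum_eq_single j (fun k _ hk => by rw [hoff j k hk, zero_smul])
        (fun hmem => absurd (Finset.mem_univ j) hmem), hcc j]
      simp
    intro x
    rw [hφid]
    simp
  have hc0 : c ≠ 0 := by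
    intro hc'
    exact hφ0 (LinearMap.ext fun x => by rw [hφc x, hc', zero_smul]; rfl)
  -- conclude δ = 1/n
  have hTc : T = ((n : F) + 1) * c := by
    rw [hT, Finset.sum_congr rfl fun j _ => hcc j, Finset.sum_const, Finset.card_univ,
      Fintype.card_fin, nsmul_eq_mul]
    push_cast
    ring
  have heq := hdiag2 0
  rw [hcc 0, hTc] at heq
  have h1 : δ * (n : F) = 1 := mul_right_cancel₀ hc0 (by linear_combination -heq)
  exact ⟨eq_inv_of_mul_eq_one_left (by linear_combination h1), c, hφc⟩
end

section
/- Let A be an 8-dimensional composition algebra over a field F of characteristic ≠ 2,3, with nondegenerate symmetric bilinear form (x,y) = (1/2)(x·ȳ + y·x̄), and define the ternary operation [x,y,z] = (x·ȳ)·z − (y,z)x + (x,z)y − (x,y)z on A (the ternary Malcev algebra M_8). Then the multiplication [·,·,·] is antisymmetric: it changes sign under transposition of any two arguments. -/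
/-- On an 8-dimensional composition algebra `A` (char `F` ≠ 2,3) with involution
`conj`, bilinear form `(x,y) = (1/2)(x·ȳ + y·x̄)` and ternary product
`[x,y,z] = (x ȳ) z − (y,z)x + (x,z)y − (x,y)z`, the ternary multiplication is
antisymmetric: it changes sign under transposition of any two arguments. -/
theorem M8_ternary_product_antisymmetric
    {F A : Type*} [Field F] [NonAssocRing A] [Module F A]
    [SMulCommClass F A A] [IsScalarTower F A A]
    (h2 : (2 : F) ≠ 0) (h3 : (3 : F) ≠ 0)
    (conj : A →ₗ[F] A)
    (hconj1 : conj 1 = 1)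
    (hconjinv : ∀ x : A, conj (conj x) = x)
    (hconjmul : ∀ x y : A, conj (x * y) = conj y * conj x)
    (form : A →ₗ[F] A →ₗ[F] F)
    (hform : ∀ x y : A, x * conj y + y * conj x = (2 * form x y) • (1 : A))
    (hnondeg : ∀ x : A, (∀ y : A, form x y = 0) → x = 0)
    (hcomp : ∀ x y : A, form (x * y) (x * y) = form x x * form y y)
    (hdim : Module.finrank F A = 8)
    (T : A → A → A → A)
    (hT : ∀ x y z : A,
      T x y z = (x * conj y) * z - form y z • x + form x z • y - form x y • z) :
    (∀ x y z : A, T y x z = - T x y z) ∧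
    (∀ x y z : A, T x z y = - T x y z) ∧
    (∀ x y z : A, T z y x = - T x y z) := by
  -- `1 ≠ 0` in `A`, since `finrank = 8 ≠ 0`.
  have h10 : (1 : A) ≠ 0 := by
    intro h
    have hz : ∀ a : A, a = 0 := fun a => by rw [← mul_one a, h, mul_zero]
    have : Subsingleton A := ⟨fun a b => by rw [hz a, hz b]⟩
    rw [Module.finrank_zero_of_subsingleton] at hdim
    exact absurd hdim (by norm_num)
  -- scalar cancellation against `1`
  have hsmul1 : ∀ c : F, c • (1 : A) = 0 → c = 0 := by
    intro c hc
    by_contra h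
    apply h10
    calc (1 : A) = c⁻¹ • (c • (1 : A)) := by
          rw [smul_smul, inv_mul_cancel₀ h, one_smul]
      _ = 0 := by rw [hc, smul_zero]
  -- the form is symmetric
  have hsymm : ∀ x y : A, form x y = form y x := by
    intro x y
    have e : (2 * form x y) • (1 : A) = (2 * form y x) • (1 : A) := by
      rw [← hform, ← hform, add_comm]
    have e2 : (2 * form x y - 2 * form y x) • (1 : A) = 0 := by
      rw [sub_smul, e, sub_self]
    have e3 := hsmul1 _ e2
    rw [sub_eq_zero] at e3
    exact mul_left_cancel₀ h2 e3
  -- formula for the involution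
  have hconjeq : ∀ x : A, conj x = (2 * form x 1) • (1 : A) - x := by
    intro x
    have e := hform x 1
    rw [hconj1, mul_one, one_mul] at e
    exact eq_sub_of_add_eq' e
  -- `form 1 1 = 1`
  have f11 : form (1 : A) 1 = 1 := by
    have e := hform (1 : A) 1
    rw [hconj1, mul_one] at e
    have e2 : ((2 : F) - 2 * form (1 : A) 1) • (1 : A) = 0 := by
      rw [sub_smul, two_smul, e, sub_self]
    have e3 := hsmul1 _ e2
    rw [sub_eq_zero] at e3
    exact (mul_left_cancel₀ h2 (by rw [mul_one]; exact e3)).symm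
  -- linearization of the composition law in the first variable
  have formL : ∀ x y z : A, form (x * z) (y * z) = form x y * form z z := by
    intro x y z
    have e := hcomp (x + y) z
    simp only [add_mul, map_add, LinearMap.add_apply] at e
    rw [hsymm (y * z) (x * z), hsymm y x, hcomp x z, hcomp y z] at e
    exact mul_left_cancel₀ h2 (by linear_combination e)
  -- full linearization
  have formL2 : ∀ x y z w : A,
      form (x * z) (y * w) + form (x * w) (y * z) = 2 * (form x y * form z w) := by
    intro x y z w
    have e := formL x y (z + w)
    simp only [mul_add, map_add, LinearMap.add_apply] at e
    rw [formL x y z, formL x y w, hsymm w z] at e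
    linear_combination e
  -- adjoint identity : right multiplication by `z` is adjoint to right mult. by `conj z`
  have hR : ∀ x y z : A, form (x * z) y = form x (y * conj z) := by
    intro x y z
    have e := formL2 x y z 1
    rw [mul_one, mul_one] at e
    have hc : y * conj z = (2 * form z 1) • y - y * z := by
      rw [hconjeq z, mul_sub, mul_smul_comm, mul_one]
    rw [hc, map_sub, map_smul]
    simp only [smul_eq_mul]
    linear_combination e
  -- the involution preserves the norm
  have Nconj : ∀ y : A, form (conj y) (conj y) = form y y := by
    intro y
    rw [hconjeq y]
    simp only [map_sub, map_smul, LinearMap.sub_apply, LinearMap.smul_apply,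
      smul_eq_mul, f11, hsymm (1 : A) y]
    ring
  -- key composition algebra identity : (x ȳ) y = N(y) x
  have main : ∀ x y : A, (x * conj y) * y = form y y • x := by
    intro x y
    have hv : (x * conj y) * y - form y y • x = 0 := by
      apply hnondeg
      intro w
      rw [map_sub, map_smul, LinearMap.sub_apply, LinearMap.smul_apply, smul_eq_mul,
        hR (x * conj y) w y, formL x w (conj y), Nconj y]
      ring
    exact sub_eq_zero.mp hv
  -- linearized key identity
  have key : ∀ x y z : A,
      (x * conj y) * z + (x * conj z) * y = (2 * form y z) • x := by
    intro x y z
    have e := main x (y + z)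
    simp only [map_add, mul_add, add_mul, LinearMap.add_apply] at e
    rw [main x y, main x z, hsymm z y] at e
    linear_combination (norm := module) e
  -- identity used for the swap of the first two arguments
  have e1 : ∀ x y z : A,
      (x * conj y) * z + (y * conj x) * z = (2 * form x y) • z := by
    intro x y z
    rw [← add_mul, hform, smul_mul_assoc, one_mul]
  -- antisymmetry in the first two arguments
  have key1 : ∀ x y z : A, T y x z = - T x y z := by
    intro x y z
    rw [hT y x z, hT x y z, hsymm y x]
    linear_combination (norm := module) e1 x y z
  -- antisymmetry in the last two arguments
  have key2 : ∀ x y z : A, T x z y = - T x y z := by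
    intro x y z
    rw [hT x z y, hT x y z, hsymm z y]
    linear_combination (norm := module) key x y z
  refine ⟨key1, key2, ?_⟩
  intro x y z
  rw [key1 y z x, key2 y x z, key1 x y z, neg_neg]
end
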